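/- arXiv:1908.05406 — 10 statements merged into one kernel-verified Lean document; each statement's English description precedes it below -/
import Mathlib

section
/- Let X be a real Hilbert space, U a closed linear subspace of X, and C a nonempty closed convex subset of X. Then the projection of 0 onto the closure of the set U − C = {u − c : u ∈ U, c ∈ C} belongs to the orthogonal complement U^⊥. -/
open scoped RealInnerProductSpace Pointwise
open Filter Topology

noncomputable section

variable {X : Type*}

section Defs
variable [NormedAddCommGroup X] [InnerProductSpace ℝ X]

/-- `p` is the metric projection of `x` onto `S`: `p ∈ S` and
`⟪s − p, x − p⟫ ≤ 0` for all `s ∈ S`. -/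
def IsMetricProj (S : Set X) (x p : X) : Prop :=
  p ∈ S ∧ ∀ s ∈ S, ⟪s - p, x - p⟫ ≤ (0 : ℝ)

/-- a function `X → (−∞,+∞]` is proper: never `−∞` and somewhere finite. -/
def EProper (g : X → EReal) : Prop :=
  (∀ x, g x ≠ ⊥) ∧ ∃ x, g x ≠ ⊤

/-- convexity for extended-real-valued functions. -/
def EConvexOn (g : X → EReal) : Prop :=
  ∀ x y : X, ∀ a b : ℝ, 0 ≤ a → 0 ≤ b → a + b = 1 →
    g (a • x + b • y) ≤ (a : EReal) * g x + (b : EReal) * g y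

/-- the convex subdifferential `∂g(x)`. -/
def ESubdiff (g : X → EReal) (x : X) : Set X :=
  {xs | ∀ z : X, g x + ((⟪z - x, xs⟫ : ℝ) : EReal) ≤ g z}

/-- the Fenchel conjugate `g*`. -/
def EConj (g : X → EReal) (xs : X) : EReal :=
  ⨆ x : X, ((⟪x, xs⟫ : ℝ) : EReal) - g x

/-- `prox` is the proximal mapping of `g`: `prox x` minimizes
`y ↦ g y + ‖y − x‖²/2`. -/
def IsProx (g : X → EReal) (prox : X → X) : Prop :=
  ∀ x y : X,
    g (prox x) + ((‖prox x - x‖ ^ 2 / 2 : ℝ) : EReal) ≤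
      g y + ((‖y - x‖ ^ 2 / 2 : ℝ) : EReal)

/-- the normal cone operator of a closed linear subspace:
`N_U(x) = U^⊥` if `x ∈ U`, and `∅` otherwise. -/
def normalCone (U : Submodule ℝ X) (x : X) : Set X :=
  {u | x ∈ U ∧ u ∈ Uᗮ}

/-- `c` is a weak cluster point of the sequence `s`, i.e. the weak limit of a
subsequence of `s`. -/
def IsWeakClusterPt (s : ℕ → X) (c : X) : Prop :=
  ∃ φ : ℕ → ℕ, StrictMono φ ∧
    ∀ w : X, Tendsto (fun k => (⟪s (φ k), w⟫ : ℝ)) atTop (𝓝 ⟪c, w⟫)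

end Defs

/-- If `X` is a real Hilbert space, `U` a closed linear subspace and
`C` a nonempty closed convex subset, then the projection of `0` onto
`closure (U − C)` belongs to `U^⊥`. -/
theorem proj_zero_closure_sub_mem_orthogonal
    [NormedAddCommGroup X] [InnerProductSpace ℝ X] [CompleteSpace X]
    (U : Submodule ℝ X) (hUclosed : IsClosed (U : Set X))
    (C : Set X) (hCne : C.Nonempty) (hCclosed : IsClosed C) (hCconv : Convex ℝ C)
    (p : X) (hp : IsMetricProj (closure ((U : Set X) - C)) 0 p) :
    p ∈ Uᗮ := by
  obtain ⟨hpmem, hproj⟩ := hp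
  rw [Submodule.mem_orthogonal]
  intro u hu
  have key : ∀ v, v ∈ U → 0 ≤ ⟪(v : X), p⟫ := by
    intro v hv
    have hsub : (fun x => x + v) '' ((U : Set X) - C) ⊆ (U : Set X) - C := by
      rintro _ ⟨x, ⟨a, ha, b, hb, rfl⟩, rfl⟩
      exact ⟨a + v, U.add_mem ha hv, b, hb, add_sub_right_comm a v b⟩
    have hmem : p + v ∈ closure ((U : Set X) - C) := by
      have h1 : p + v ∈ (fun x => x + v) '' closure ((U : Set X) - C) :=
        ⟨p, hpmem, rfl⟩
      have h2 := image_closure_subset_closure_image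
        (f := fun x : X => x + v) (by continuity) (s := (U : Set X) - C)
      exact closure_mono hsub (h2 h1)
    have := hproj (p + v) hmem
    have heq : (p + v) - p = v := by abel
    rw [heq, zero_sub, inner_neg_right] at this
    linarith
  have h1 := key u hu
  have h2 := key (-u) (U.neg_mem hu)
  rw [inner_neg_left] at h2
  linarith
end
end

section
/- Let X be a real Hilbert space, U a closed linear subspace of X, and let C₁, C₂ be nonempty closed convex subsets of X. Set S₁ = U − C₁ and S₂ = U^⊥ − C₂. Then P_{U^⊥}(closure S₁) ⊆ closure S₁ and P_U(closure S₂) ⊆ closure S₂, where P_U and P_{U^⊥} are the orthogonal projectors onto U and U^⊥. -/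
open scoped RealInnerProductSpace Pointwise
open Filter Topology

noncomputable section

variable {X : Type*}

/-- With `S₁ = U − C₁` and `S₂ = U^⊥ − C₂`, the closure of `S₁` is
invariant under `P_{U^⊥}` and the closure of `S₂` is invariant under `P_U`. -/
theorem proj_invariance_of_closures
    [NormedAddCommGroup X] [InnerProductSpace ℝ X] [CompleteSpace X]
    (U : Submodule ℝ X) (hUclosed : IsClosed (U : Set X)) [Submodule.HasOrthogonalProjection U]
    (C₁ : Set X) (hC₁ne : C₁.Nonempty) (hC₁closed : IsClosed C₁) (hC₁conv : Convex ℝ C₁)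
    (C₂ : Set X) (hC₂ne : C₂.Nonempty) (hC₂closed : IsClosed C₂) (hC₂conv : Convex ℝ C₂) :
    (∀ y ∈ closure ((U : Set X) - C₁),
        ((Submodule.orthogonalProjectionOnto Uᗮ y : X)) ∈ closure ((U : Set X) - C₁)) ∧
    (∀ y ∈ closure ((Uᗮ : Set X) - C₂),
        ((Submodule.orthogonalProjectionOnto U y : X)) ∈ closure ((Uᗮ : Set X) - C₂)) := by
  constructor
  · have hmap : Set.MapsTo (fun y => ((Submodule.orthogonalProjectionOnto Uᗮ y : X)))
        ((U : Set X) - C₁) ((U : Set X) - C₁) := by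
      rintro y ⟨u, hu, c, hc, rfl⟩
      refine ⟨(Submodule.orthogonalProjectionOnto U c : X), (Submodule.orthogonalProjectionOnto U c).2, c, hc, ?_⟩
      have hu0 : Submodule.orthogonalProjectionOnto Uᗮ u = 0 :=
        Submodule.orthogonalProjectionOnto_apply_of_mem_orthogonal
          (U.le_orthogonal_orthogonal hu)
      have hsum : (Submodule.orthogonalProjectionOnto U c : X) + (Submodule.orthogonalProjectionOnto Uᗮ c : X) = c :=
          U.starProjection_add_starProjection_orthogonal c
      simp only [map_sub, hu0]
      push_cast
      linear_combination (norm := module) hsum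
    have := hmap.closure (Continuous.subtype_val (Submodule.orthogonalProjectionOnto Uᗮ).continuous)
    intro y hy
    exact closure_minimal subset_closure isClosed_closure (this hy)
  · have hmap : Set.MapsTo (fun y => ((Submodule.orthogonalProjectionOnto U y : X)))
        ((Uᗮ : Set X) - C₂) ((Uᗮ : Set X) - C₂) := by
      rintro y ⟨v, hv, c, hc, rfl⟩
      refine ⟨(Submodule.orthogonalProjectionOnto Uᗮ c : X), (Submodule.orthogonalProjectionOnto Uᗮ c).2, c, hc, ?_⟩
      have hv0 : Submodule.orthogonalProjectionOnto U v = 0 :=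
        Submodule.orthogonalProjectionOnto_apply_of_mem_orthogonal hv
      have hsum : (Submodule.orthogonalProjectionOnto U c : X) + (Submodule.orthogonalProjectionOnto Uᗮ c : X) = c :=
          U.starProjection_add_starProjection_orthogonal c
      simp only [map_sub, hv0]
      push_cast
      linear_combination (norm := module) hsum
    have := hmap.closure (Continuous.subtype_val (Submodule.orthogonalProjectionOnto U).continuous)
    intro y hy
    exact closure_minimal subset_closure isClosed_closure (this hy)
end
end

section
/- Let X be a real Hilbert space, U a closed linear subspace of X, and let C₁, C₂ be nonempty closed convex subsets of X. Set S₁ = U − C₁, S₂ = U^⊥ − C₂, v_D = P_{closure S₁}(0), and v_R = P_{closure S₂}(0). Then: (a) v_D ∈ U^⊥ and v_R ∈ U; (b) v_D + v_R ∈ (closure S₁) ∩ (closure S₂); and (c) v_D + v_R = P_{(closure S₁) ∩ (closure S₂)}(0), i.e., v_D + v_R is the minimal-norm element of (closure S₁) ∩ (closure S₂). -/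
open scoped RealInnerProductSpace Pointwise
open Filter Topology

noncomputable section

variable {X : Type*}

/-- With `S₁ = U − C₁`, `S₂ = U^⊥ − C₂`, `v_D = P_{closure S₁} 0` and
`v_R = P_{closure S₂} 0`, one has `v_D ∈ U^⊥`, `v_R ∈ U`,
`v_D + v_R ∈ closure S₁ ∩ closure S₂`, and `v_D + v_R = P_{closure S₁ ∩ closure S₂} 0`,
i.e. `v_D + v_R` is the minimal-norm element of `closure S₁ ∩ closure S₂`. -/
theorem vD_add_vR_is_projection
    [NormedAddCommGroup X] [InnerProductSpace ℝ X] [CompleteSpace X]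
    (U : Submodule ℝ X) (hUclosed : IsClosed (U : Set X))
    (C₁ : Set X) (hC₁ne : C₁.Nonempty) (hC₁closed : IsClosed C₁) (hC₁conv : Convex ℝ C₁)
    (C₂ : Set X) (hC₂ne : C₂.Nonempty) (hC₂closed : IsClosed C₂) (hC₂conv : Convex ℝ C₂)
    (vD vR : X)
    (hvD : IsMetricProj (closure ((U : Set X) - C₁)) 0 vD)
    (hvR : IsMetricProj (closure ((Uᗮ : Set X) - C₂)) 0 vR) :
    vD ∈ Uᗮ ∧ vR ∈ U ∧
    vD + vR ∈ closure ((U : Set X) - C₁) ∩ closure ((Uᗮ : Set X) - C₂) ∧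
    IsMetricProj (closure ((U : Set X) - C₁) ∩ closure ((Uᗮ : Set X) - C₂)) 0 (vD + vR) ∧
    (∀ w ∈ closure ((U : Set X) - C₁) ∩ closure ((Uᗮ : Set X) - C₂),
      ‖vD + vR‖ ≤ ‖w‖) := by
  obtain ⟨hvD_mem, hvD_ineq⟩ := hvD
  obtain ⟨hvR_mem, hvR_ineq⟩ := hvR
  -- translation invariance of closure (V - C) under adding elements of V
  have trans : ∀ (V : Submodule ℝ X) (C : Set X) (s v : X),
      s ∈ closure ((V : Set X) - C) → v ∈ V → s + v ∈ closure ((V : Set X) - C) := by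
    intro V C s v hs hv
    have hmaps : Set.MapsTo (· + v) ((V : Set X) - C) ((V : Set X) - C) := by
      rintro x ⟨u, hu, c, hc, rfl⟩
      exact ⟨u + v, V.add_mem hu hv, c, hc, by exact (sub_add_eq_add_sub u c v).symm⟩
    have h := map_mem_closure (continuous_add_right v) hs hmaps
    exact h
  have hDorth : vD ∈ Uᗮ := by
    rw [Submodule.mem_orthogonal]
    intro u hu
    have h1 := hvD_ineq _ (trans U C₁ vD u hvD_mem hu)
    have h2 := hvD_ineq _ (trans U C₁ vD (-u) hvD_mem (U.neg_mem hu))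
    simp only [add_sub_cancel_left, zero_sub, inner_neg_right, inner_neg_left,
      neg_neg] at h1 h2
    linarith
  have hRorthorth : vR ∈ Uᗮᗮ := by
    rw [Submodule.mem_orthogonal]
    intro u hu
    have h1 := hvR_ineq _ (trans Uᗮ C₂ vR u hvR_mem hu)
    have h2 := hvR_ineq _ (trans Uᗮ C₂ vR (-u) hvR_mem (Uᗮ.neg_mem hu))
    simp only [add_sub_cancel_left, zero_sub, inner_neg_right, inner_neg_left,
      neg_neg] at h1 h2
    linarith
  haveI : CompleteSpace U := hUclosed.completeSpace_coe
  have hRU : vR ∈ U := by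
    rw [← Submodule.orthogonal_orthogonal U]; exact hRorthorth
  have hmem1 : vD + vR ∈ closure ((U : Set X) - C₁) := trans U C₁ vD vR hvD_mem hRU
  have hmem2 : vD + vR ∈ closure ((Uᗮ : Set X) - C₂) := by
    have := trans Uᗮ C₂ vR vD hvR_mem hDorth
    rwa [add_comm] at this
  have o1 : ⟪vR, vD⟫ = (0 : ℝ) := (Submodule.mem_orthogonal U vD).mp hDorth vR hRU
  have o2 : ⟪vD, vR⟫ = (0 : ℝ) := by rw [real_inner_comm]; exact o1
  have hproj : IsMetricProj (closure ((U : Set X) - C₁) ∩ closure ((Uᗮ : Set X) - C₂))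
      0 (vD + vR) := by
    refine ⟨⟨hmem1, hmem2⟩, ?_⟩
    rintro s ⟨hs1, hs2⟩
    have h1 := hvD_ineq s hs1
    have h2 := hvR_ineq s hs2
    have expand : ⟪s - (vD + vR), (0 : X) - (vD + vR)⟫ =
        ⟪s - vD, (0 : X) - vD⟫ + ⟪s - vR, (0 : X) - vR⟫ := by
      simp only [zero_sub, inner_neg_right, inner_sub_left, inner_add_left,
        inner_add_right]
      linarith
    linarith [expand]
  refine ⟨hDorth, hRU, ⟨hmem1, hmem2⟩, hproj, ?_⟩
  intro w hw
  have h := hproj.2 w hw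
  rw [zero_sub, inner_neg_right, inner_sub_left, neg_nonpos] at h
  have hsq : ‖vD + vR‖ * ‖vD + vR‖ ≤ ⟪w, vD + vR⟫ := by
    have := real_inner_self_eq_norm_mul_norm (vD + vR)
    linarith
  have hcs : ⟪w, vD + vR⟫ ≤ ‖w‖ * ‖vD + vR‖ := real_inner_le_norm w (vD + vR)
  rcases eq_or_lt_of_le (norm_nonneg (vD + vR)) with hz | hz
  · rw [← hz]; exact norm_nonneg w
  · exact le_of_mul_le_mul_right (by linarith) hz
end
end

section
/- Let X be a finite-dimensional real inner product space, U a linear subspace of X, and g : X → (−∞,+∞] proper, convex, and lower semicontinuous. Assume the constraint qualification 0 ∈ U^⊥ + dom g*, where g* is the Fenchel conjugate of g. Let T = Id − P_U + Prox_g ∘ R_U be the Douglas–Rachford operator and v = P_{closure(ran(Id − T))}(0) the minimal displacement vector. Then v = P_{closure(U − dom g)}(0); in particular v ∈ U^⊥. -/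
open scoped RealInnerProductSpace Pointwise
open Filter Topology

noncomputable section

variable {X : Type*}

/-- A lower semicontinuous `EReal`-valued function attains its minimum on a
nonempty compact set (in a T2 space). -/
lemma lsc_exists_min_on_compact {α : Type*} [TopologicalSpace α] [T2Space α]
    {K : Set α} (hK : IsCompact K) (hne : K.Nonempty)
    {F : α → EReal} (hF : LowerSemicontinuous F) :
    ∃ p ∈ K, ∀ x ∈ K, F p ≤ F x := by
  haveI : Nonempty K := hne.to_subtype
  set S : K → Set α := fun x => {z | F z ≤ F x.1} ∩ K with hS
  have hclosed : ∀ x : K, IsClosed (S x) :=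
    fun x => (hF.isClosed_preimage (F x.1)).inter hK.isClosed
  have hcomp : ∀ x : K, IsCompact (S x) :=
    fun x => hK.inter_left (hF.isClosed_preimage (F x.1))
  have hnon : ∀ x : K, (S x).Nonempty :=
    fun x => ⟨x.1, ⟨show F x.1 ≤ F x.1 from le_rfl, x.2⟩⟩
  have hdir : Directed (· ⊇ ·) S := by
    intro x y
    rcases le_total (F x.1) (F y.1) with h | h
    · exact ⟨x, subset_rfl, fun z hz => ⟨le_trans hz.1 h, hz.2⟩⟩
    · exact ⟨y, fun z hz => ⟨le_trans hz.1 h, hz.2⟩, subset_rfl⟩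
  obtain ⟨p, hp⟩ :=
    IsCompact.nonempty_iInter_of_directed_nonempty_isCompact_isClosed S hdir hnon hcomp hclosed
  simp only [Set.mem_iInter] at hp
  obtain ⟨x⟩ := ‹Nonempty K›
  exact ⟨p, (hp x).2, fun z hz => (hp ⟨z, hz⟩).1⟩

/-- If `b ≤ a + t * C` for all small positive `t`, then `b ≤ a`. -/
lemma le_of_forall_small_mul {a b C t0 : ℝ} (ht0 : 0 < t0)
    (h : ∀ t : ℝ, 0 < t → t ≤ t0 → b ≤ a + t * C) : b ≤ a := by
  by_contra hab
  push_neg at hab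
  set t := min t0 ((b - a) / (2 * (|C| + 1))) with ht
  have hC : 0 < |C| + 1 := by positivity
  have htpos : 0 < t := lt_min ht0 (div_pos (by linarith) (by positivity))
  have h1 := h t htpos (min_le_left _ _)
  have h2 : t * C ≤ t * |C| := by
    have := le_abs_self C
    nlinarith
  have h3 : t ≤ (b - a) / (2 * (|C| + 1)) := min_le_right _ _
  have h3' : t * (2 * (|C| + 1)) ≤ b - a := (le_div_iff₀ (by positivity)).mp h3
  have h4 : t * |C| ≤ (b - a) / 2 := by nlinarith [abs_nonneg C, htpos.le]
  linarith

set_option maxHeartbeats 2000000 in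
/-- In finite dimensions, under the constraint qualification
`0 ∈ U^⊥ + dom g*`, the minimal displacement vector
`v = P_{closure (ran (Id − T))} 0` of the Douglas–Rachford operator
`T = Id − P_U + Prox_g ∘ R_U` equals `P_{closure (U − dom g)} 0`;
in particular `v ∈ U^⊥`. -/
theorem minimal_displacement_eq_gap_vector
    [NormedAddCommGroup X] [InnerProductSpace ℝ X] [FiniteDimensional ℝ X]
    (U : Submodule ℝ X)
    (g : X → EReal) (hgproper : EProper g) (hglsc : LowerSemicontinuous g)
    (hgconv : EConvexOn g)
    (prox : X → X) (hprox : IsProx g prox)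
    (PU RU T : X → X)
    (hPU : ∀ z, PU z = (U.orthogonalProjectionOnto z : X))
    (hRU : ∀ z, RU z = 2 • PU z - z)
    (hT : ∀ z, T z = z - PU z + prox (RU z))
    (hCQ : ∃ u w : X, u ∈ Uᗮ ∧ EConj g w ≠ ⊤ ∧ u + w = 0)
    (v : X)
    (hv : IsMetricProj (closure (Set.range fun z => z - T z)) 0 v) :
    IsMetricProj (closure ((U : Set X) - {z | g z ≠ ⊤})) 0 v ∧ v ∈ Uᗮ := by
  obtain ⟨hbot, x0, hx0⟩ := hgproper
  obtain ⟨u0, w0, hu0, hw0top, hsum⟩ := hCQ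
  have hw0perp : w0 ∈ Uᗮ := by
    have h : w0 = -u0 := eq_neg_of_add_eq_zero_right hsum
    rw [h]; exact Submodule.neg_mem _ hu0
  -- basic facts about the projection PU
  have hPUmem : ∀ x, PU x ∈ U := fun x => by rw [hPU]; exact SetLike.coe_mem _
  have hPUperp : ∀ x, x - PU x ∈ Uᗮ := fun x => by
    rw [hPU]; exact Submodule.sub_starProjection_mem_orthogonal x
  have hPUadd : ∀ x y, PU (x + y) = PU x + PU y := fun x y => by
    rw [hPU, hPU, hPU, map_add]; rfl
  have hPUsub : ∀ x y, PU (x - y) = PU x - PU y := fun x y => by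
    rw [hPU, hPU, hPU, map_sub]; rfl
  have hPUsmul : ∀ (c : ℝ) x, PU (c • x) = c • PU x := fun c x => by
    rw [hPU, hPU, map_smul]; rfl
  have hPUzero : PU 0 = 0 := by
    rw [hPU, map_zero]; rfl
  have hPUidem : ∀ x, PU (PU x) = PU x := fun x => by
    conv_lhs => rw [hPU x, hPU]
    rw [Submodule.orthogonalProjectionOnto_mem_subspace_eq_self, ← hPU]
  have hPUofperp : ∀ x, x ∈ Uᗮ → PU x = 0 := fun x hx => by
    rw [hPU, Submodule.orthogonalProjectionOnto_apply_of_mem_orthogonal hx]; rfl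
  have hinnerUperp : ∀ u w, u ∈ U → w ∈ Uᗮ → ⟪u, w⟫ = (0 : ℝ) :=
    fun u w hu hw => (Submodule.mem_orthogonal U w).mp hw u hu
  have hPURU : ∀ x, PU (RU x) = PU x := fun x => by
    rw [hRU, two_smul, hPUsub, hPUadd, hPUidem]; abel
  have hRUinv : ∀ x, RU (RU x) = x := fun x => by
    rw [hRU (RU x), hPURU, hRU x, two_smul]; abel
  have hd : ∀ z, z - T z = PU z - prox (RU z) := fun z => by rw [hT]; abel
  -- prox lands in the domain of g
  have hproxdom : ∀ ξ, g (prox ξ) ≠ ⊤ := by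
    intro ξ hc
    have h := hprox ξ x0
    rw [hc, EReal.top_add_coe, ← EReal.coe_toReal hx0 (hbot x0), ← EReal.coe_add] at h
    exact EReal.coe_ne_top _ (top_le_iff.mp h)
  -- the conjugate value at w0 is a real number G
  have hEbot : EConj g w0 ≠ ⊥ := by
    intro hc
    have h : ((⟪x0, w0⟫ : ℝ) : EReal) - g x0 ≤ EConj g w0 :=
      le_iSup (fun x => ((⟪x, w0⟫ : ℝ) : EReal) - g x) x0
    rw [hc, le_bot_iff, ← EReal.coe_toReal hx0 (hbot x0), ← EReal.coe_sub] at h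
    exact EReal.coe_ne_bot _ h
  set G : ℝ := (EConj g w0).toReal with hGdef
  have hGeq : EConj g w0 = (G : EReal) := (EReal.coe_toReal hw0top hEbot).symm
  have hFY : ∀ p, g p ≠ ⊤ → ⟪p, w0⟫ - (g p).toReal ≤ G := by
    intro p hp
    have h : ((⟪p, w0⟫ : ℝ) : EReal) - g p ≤ EConj g w0 :=
      le_iSup (fun x => ((⟪x, w0⟫ : ℝ) : EReal) - g x) p
    rw [← EReal.coe_toReal hp (hbot p), ← EReal.coe_sub, hGeq] at h
    exact EReal.coe_le_coe_iff.mp h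
  clear_value G
  -- ‖v‖ is at most the norm of any element of ran (Id - T)
  have hve : ∀ e ∈ Set.range (fun z => z - T z), ‖v‖ ≤ ‖e‖ := by
    intro e he
    have h2 : ⟪e - v, 0 - v⟫ ≤ (0 : ℝ) := hv.2 e (subset_closure he)
    rw [zero_sub, inner_neg_right, inner_sub_left, real_inner_self_eq_norm_sq] at h2
    have h3 : ‖v‖ ^ 2 ≤ ⟪e, v⟫ := by linarith
    have h4 : ⟪e, v⟫ ≤ ‖e‖ * ‖v‖ := real_inner_le_norm e v
    rcases eq_or_lt_of_le (norm_nonneg v) with hz | hz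
    · rw [← hz]; exact norm_nonneg e
    · nlinarith
  -- the key quantitative construction
  have hkey : ∀ y : X, g y ≠ ⊤ → ∀ ε : ℝ, 0 < ε → ε ≤ 1 →
      ∃ z : X, ‖z - T z‖ ≤ ‖y - PU y‖ + 2 * ε := by
    intro y hy ε hε hε1
    have hεne : ε ≠ 0 := ne_of_gt hε
    set gy : ℝ := (g y).toReal with hgydef
    have hgyeq : g y = (gy : EReal) := (EReal.coe_toReal hy (hbot y)).symm
    clear_value gy
    set K0 : ℝ := max (gy + G + ‖w0‖ * ‖y - PU y‖) 0 with hK0def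
    have hK0nn : 0 ≤ K0 := le_max_right _ _
    have hK0ge : gy + G + ‖w0‖ * ‖y - PU y‖ ≤ K0 := le_max_left _ _
    clear_value K0
    set lam : ℝ := (2 * ‖w0‖ + 2 * K0 / ε + 1) / ε with hlamdef
    have hlampos : 0 < lam := by
      rw [hlamdef]
      exact div_pos (by nlinarith [norm_nonneg w0, div_nonneg (by linarith : (0:ℝ) ≤ 2 * K0) hε.le]) hε
    clear_value lam
    set μ : ℝ := ε ^ 2 / (2 * (K0 + ‖w0‖) + 1) with hμdef
    have hμpos : 0 < μ := by
      rw [hμdef]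
      exact div_pos (pow_pos hε 2) (by nlinarith [hK0nn, norm_nonneg w0])
    clear_value μ
    set χ : X → ℝ := fun w => lam / 2 * ‖w - PU w‖ ^ 2 + μ / 2 * ‖PU w‖ ^ 2 with hχdef
    have hχapp : ∀ w, χ w = lam / 2 * ‖w - PU w‖ ^ 2 + μ / 2 * ‖PU w‖ ^ 2 := fun _ => rfl
    have hχnn : ∀ w, 0 ≤ χ w := fun w => by
      rw [hχapp]
      exact add_nonneg (mul_nonneg (by linarith) (by positivity))
        (mul_nonneg (by linarith) (by positivity))
    have hχzero : χ 0 = 0 := by rw [hχapp]; simp [hPUzero]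
    clear_value χ
    set ψ : X → ℝ := fun x => χ (x - y) with hψdef
    have hψapp : ∀ x, ψ x = χ (x - y) := fun _ => rfl
    have hψy : ψ y = 0 := by rw [hψapp, sub_self, hχzero]
    clear_value ψ
    -- expansion of χ along segments
    have hχexp : ∀ w d : X, ∀ t : ℝ, χ (w + t • d) =
        χ w + t * ⟪d, lam • (w - PU w) + μ • PU w⟫ + t ^ 2 * χ d := by
      intro w d t
      have e1 : (w + t • d) - PU (w + t • d) = (w - PU w) + t • (d - PU d) := by
        rw [hPUadd, hPUsmul, smul_sub]; abel
      have e2 : PU (w + t • d) = PU w + t • PU d := by rw [hPUadd, hPUsmul]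
      have i0 : ⟪PU d, w - PU w⟫ = (0 : ℝ) := hinnerUperp _ _ (hPUmem d) (hPUperp w)
      have i1 : ⟪w - PU w, t • (d - PU d)⟫ = t * ⟪d, w - PU w⟫ := by
        rw [real_inner_smul_right, real_inner_comm, inner_sub_left, i0]; ring
      have i0' : ⟪d - PU d, PU w⟫ = (0 : ℝ) := by
        rw [real_inner_comm]; exact hinnerUperp _ _ (hPUmem w) (hPUperp d)
      have i2 : ⟪PU w, t • PU d⟫ = t * ⟪d, PU w⟫ := by
        rw [real_inner_smul_right, real_inner_comm]
        have h0 : ⟪d, PU w⟫ - ⟪PU d, PU w⟫ = (0 : ℝ) := by rw [← inner_sub_left]; exact i0'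
        have h1 : ⟪PU d, PU w⟫ = (⟪d, PU w⟫ : ℝ) := by linarith
        rw [h1]
      have hn1 : ‖(w - PU w) + t • (d - PU d)‖ ^ 2
          = ‖w - PU w‖ ^ 2 + 2 * (t * ⟪d, w - PU w⟫) + t ^ 2 * ‖d - PU d‖ ^ 2 := by
        rw [norm_add_sq_real, i1, norm_smul, Real.norm_eq_abs, mul_pow, sq_abs]
      have hn2 : ‖PU w + t • PU d‖ ^ 2
          = ‖PU w‖ ^ 2 + 2 * (t * ⟪d, PU w⟫) + t ^ 2 * ‖PU d‖ ^ 2 := by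
        rw [norm_add_sq_real, i2, norm_smul, Real.norm_eq_abs, mul_pow, sq_abs]
      have hip : ⟪d, lam • (w - PU w) + μ • PU w⟫
          = lam * ⟪d, w - PU w⟫ + μ * ⟪d, PU w⟫ := by
        rw [inner_add_right, real_inner_smul_right, real_inner_smul_right]
      rw [hχapp, hχapp, hχapp, e1, e2, hn1, hn2, hip]; ring
    -- continuity, lower semicontinuity
    have hPUcont : Continuous PU := by
      have hfe : PU = fun z => ((U.orthogonalProjectionOnto z : X)) := funext hPU
      rw [hfe]; exact (U.orthogonalProjectionOnto).continuous.subtype_val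
    have hψcont : Continuous ψ := by
      have h1 : Continuous χ := by
        rw [hχdef]
        exact (continuous_const.mul ((continuous_id.sub hPUcont).norm.pow 2)).add
          (continuous_const.mul (hPUcont.norm.pow 2))
      rw [hψdef]; exact h1.comp (continuous_id.sub continuous_const)
    set F : X → EReal := fun x => g x + ((ψ x : ℝ) : EReal) with hFdef
    have hFapp : ∀ x, F x = g x + ((ψ x : ℝ) : EReal) := fun _ => rfl
    have hFlsc : LowerSemicontinuous F := by
      rw [hFdef]
      exact hglsc.add' ((continuous_coe_real_ereal.comp hψcont).lowerSemicontinuous)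
        (fun x => EReal.continuousAt_add (Or.inr (EReal.coe_ne_bot _))
          (Or.inr (EReal.coe_ne_top _)))
    clear_value F
    set R : ℝ := 2 * (K0 + ‖w0‖) / μ + 2 with hRdef
    have hRpos : 0 < R := by
      rw [hRdef]
      have h0 : 0 ≤ 2 * (K0 + ‖w0‖) / μ :=
        div_nonneg (by nlinarith [hK0nn, norm_nonneg w0]) hμpos.le
      linarith
    clear_value R
    obtain ⟨p, hpK, hpmin⟩ := lsc_exists_min_on_compact (isCompact_closedBall y R)
      ⟨y, Metric.mem_closedBall_self hRpos.le⟩ hFlsc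
    have hFpy : F p ≤ F y := hpmin y (Metric.mem_closedBall_self hRpos.le)
    have hgptop : g p ≠ ⊤ := by
      intro hc
      have h := hFpy
      rw [hFapp, hFapp, hc, EReal.top_add_coe, hgyeq, ← EReal.coe_add] at h
      exact EReal.coe_ne_top _ (top_le_iff.mp h)
    set gp : ℝ := (g p).toReal with hgpdef
    have hgpeq : g p = (gp : EReal) := (EReal.coe_toReal hgptop (hbot p)).symm
    clear_value gp
    have hreal1 : gp + ψ p ≤ gy := by
      have h := hFpy
      rw [hFapp, hFapp, hgpeq, hgyeq, ← EReal.coe_add, ← EReal.coe_add] at h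
      have h2 := EReal.coe_le_coe_iff.mp h
      rw [hψy, add_zero] at h2; exact h2
    set A : X := (p - y) - PU (p - y) with hAdef
    set B : X := PU (p - y) with hBdef
    set r : ℝ := ‖A‖ with hrdef
    set m : ℝ := ‖B‖ with hmdef
    have hrnn : 0 ≤ r := norm_nonneg _
    have hmnn : 0 ≤ m := norm_nonneg _
    have hAperp : A ∈ Uᗮ := hPUperp (p - y)
    have hPUB : PU B = B := hPUidem (p - y)
    have hψp : ψ p = lam / 2 * r ^ 2 + μ / 2 * m ^ 2 := by
      rw [hψapp, hχapp, hrdef, hmdef, hAdef, hBdef]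
    clear_value A B r m
    -- Fenchel-Young bound at p
    have hFYp : ⟪p, w0⟫ - gp ≤ G := by
      have h := hFY p hgptop; rwa [← hgpdef] at h
    have hpw0 : ⟪p, w0⟫ = (⟪p - PU p, w0⟫ : ℝ) := by
      have h0 : ⟪PU p, w0⟫ = (0 : ℝ) := hinnerUperp _ _ (hPUmem p) hw0perp
      rw [inner_sub_left, h0, sub_zero]
    have hdecompp : p - PU p = (y - PU y) + A := by rw [hAdef, hBdef, hPUsub]; abel
    have hnormp : ‖p - PU p‖ ≤ ‖y - PU y‖ + r := by
      rw [hdecompp, hrdef]; exact norm_add_le _ _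
    have hinlow : -(‖w0‖ * ‖p - PU p‖) ≤ ⟪p - PU p, w0⟫ := by
      have h := abs_real_inner_le_norm (p - PU p) w0
      have h2 := neg_abs_le (⟪p - PU p, w0⟫ : ℝ)
      have h3 : ‖p - PU p‖ * ‖w0‖ = ‖w0‖ * ‖p - PU p‖ := mul_comm _ _
      linarith
    have hmain : lam / 2 * r ^ 2 + μ / 2 * m ^ 2 ≤ K0 + ‖w0‖ * r := by
      have h1 : ψ p ≤ gy - gp := by linarith
      have h2 : -gp ≤ G - ⟪p, w0⟫ := by linarith
      have h3 : ‖w0‖ * ‖p - PU p‖ ≤ ‖w0‖ * (‖y - PU y‖ + r) :=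
        mul_le_mul_of_nonneg_left hnormp (norm_nonneg w0)
      rw [hψp] at h1
      linarith [hinlow, hpw0, hK0ge]
    -- r ≤ ε
    have hr : r ≤ ε := by
      rcases le_or_gt r ε with h | h
      · exact h
      exfalso
      have hlamε : lam * ε = 2 * ‖w0‖ + 2 * K0 / ε + 1 := by
        rw [hlamdef, div_mul_cancel₀ _ hεne]
      have hK0r : 2 * K0 / ε * ε = 2 * K0 := by field_simp
      have hμm2 : 0 ≤ μ / 2 * m ^ 2 := mul_nonneg (by linarith) (sq_nonneg m)
      have h1 : lam * (ε * r) ≤ lam * (r * r) := by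
        have hh : ε * r ≤ r * r := mul_le_mul_of_nonneg_right h.le hrnn
        exact mul_le_mul_of_nonneg_left hh hlampos.le
      have h2 : lam * (r * r) ≤ 2 * K0 + 2 * ‖w0‖ * r := by nlinarith [hmain, hμm2]
      have h3 : (2 * ‖w0‖ + 2 * K0 / ε + 1) * r ≤ 2 * K0 + 2 * ‖w0‖ * r := by
        calc (2 * ‖w0‖ + 2 * K0 / ε + 1) * r = lam * (ε * r) := by rw [← hlamε]; ring
        _ ≤ lam * (r * r) := h1
        _ ≤ 2 * K0 + 2 * ‖w0‖ * r := h2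
      have h4 : 2 * K0 / ε * r + r ≤ 2 * K0 := by nlinarith [h3]

      have h5 : 2 * K0 ≤ 2 * K0 / ε * r := by
        have hq : 0 ≤ 2 * K0 / ε := by positivity
        have := mul_le_mul_of_nonneg_left h.le hq
        rw [hK0r] at this; exact this
      linarith
    -- μ * m ≤ ε
    have hlr2 : 0 ≤ lam / 2 * r ^ 2 := mul_nonneg (by linarith) (sq_nonneg r)
    have hμhalf : μ / 2 * m ^ 2 ≤ K0 + ‖w0‖ := by
      have hwr : ‖w0‖ * r ≤ ‖w0‖ * 1 :=
        mul_le_mul_of_nonneg_left (hr.trans hε1) (norm_nonneg w0)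
      have hwr1 : ‖w0‖ * 1 = ‖w0‖ := mul_one _
      linarith [hmain, hlr2]
    have hμm : μ * m ≤ ε := by
      have hden : (0:ℝ) < 2 * (K0 + ‖w0‖) + 1 := by nlinarith [hK0nn, norm_nonneg w0]
      have hμle : μ * (2 * (K0 + ‖w0‖)) ≤ ε ^ 2 := by
        rw [hμdef, div_mul_eq_mul_div, div_le_iff₀ hden]
        have h5 : (0:ℝ) ≤ ε ^ 2 := sq_nonneg ε
        nlinarith [hK0nn, norm_nonneg w0]
      have e1 : μ * m ^ 2 ≤ 2 * (K0 + ‖w0‖) := by linarith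
      have e2 : μ * (μ * m ^ 2) ≤ μ * (2 * (K0 + ‖w0‖)) :=
        mul_le_mul_of_nonneg_left e1 hμpos.le
      have e3 : (μ * m) ^ 2 = μ * (μ * m ^ 2) := by ring
      have h2 : (μ * m) ^ 2 ≤ ε ^ 2 := by linarith
      exact (pow_le_pow_iff_left₀ (mul_nonneg hμpos.le hmnn) hε.le two_ne_zero).mp h2
    -- p is in the open ball
    have hpyn : ‖p - y‖ < R := by
      have hdec : p - y = A + B := by rw [hAdef, hBdef]; abel
      have horthAB : ⟪A, B⟫ = (0 : ℝ) := by
        rw [real_inner_comm]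
        rw [hAdef, hBdef]
        exact hinnerUperp _ _ (hPUmem _) (hPUperp _)
      have hsq : ‖p - y‖ ^ 2 = r ^ 2 + m ^ 2 := by
        rw [hdec, norm_add_sq_real, horthAB, hrdef, hmdef]; ring
      have hm2 : m ^ 2 ≤ 2 * (K0 + ‖w0‖) / μ := by
        rw [le_div_iff₀ hμpos]
        have e1 : m ^ 2 * μ = 2 * (μ / 2 * m ^ 2) := by ring
        linarith [hμhalf]
      have hr2 : r ^ 2 ≤ 1 := by nlinarith [hr, hε1, hrnn]
      have hcnn : 0 ≤ 2 * (K0 + ‖w0‖) / μ :=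
        div_nonneg (by nlinarith [hK0nn, norm_nonneg w0]) hμpos.le
      have hsqlt : ‖p - y‖ ^ 2 < R ^ 2 := by
        rw [hRdef]
        nlinarith [hsq, hm2, hr2, hcnn, sq_nonneg (2 * (K0 + ‖w0‖) / μ)]
      nlinarith [norm_nonneg (p - y), hRpos]
    -- the subgradient inequality at p
    set q : X := -(lam • A + μ • B) with hqdef
    clear_value q
    have hsub : ∀ x : X, g x ≠ ⊤ → gp + ⟪x - p, q⟫ ≤ (g x).toReal := by
      intro x hx
      set gx : ℝ := (g x).toReal with hgxdef
      have hgxeq : g x = (gx : EReal) := (EReal.coe_toReal hx (hbot x)).symm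
      clear_value gx
      set d : X := x - p with hddef
      set t0 : ℝ := min 1 ((R - ‖p - y‖) / (‖d‖ + 1)) with ht0def
      have ht0pos : 0 < t0 :=
        lt_min one_pos (div_pos (by linarith [hpyn]) (by positivity))
      clear_value d t0
      refine le_of_forall_small_mul (a := gx) (b := gp + ⟪d, q⟫) (C := χ d) ht0pos ?_
      intro t ht htt0
      rw [ht0def] at htt0
      have ht1 : t ≤ 1 := le_trans htt0 (min_le_left _ _)
      have htR : ‖p - y‖ + t * ‖d‖ ≤ R := by
        have h1 : t ≤ (R - ‖p - y‖) / (‖d‖ + 1) := le_trans htt0 (min_le_right _ _)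
        have h2 : t * (‖d‖ + 1) ≤ R - ‖p - y‖ := (le_div_iff₀ (by positivity)).mp h1
        have hdn : 0 ≤ ‖d‖ := norm_nonneg d
        nlinarith [ht]
      set pt : X := p + t • d with hptdef
      have hpty : pt - y = (p - y) + t • d := by rw [hptdef]; abel
      have hptK : pt ∈ Metric.closedBall y R := by
        rw [mem_closedBall_iff_norm, hpty]
        calc ‖(p - y) + t • d‖ ≤ ‖p - y‖ + ‖t • d‖ := norm_add_le _ _
        _ = ‖p - y‖ + t * ‖d‖ := by rw [norm_smul, Real.norm_eq_abs, abs_of_pos ht]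
        _ ≤ R := htR
      have hconv := hgconv p x (1 - t) t (by linarith) ht.le (by ring)
      have hptform : (1 - t) • p + t • x = pt := by
        rw [hptdef, hddef, sub_smul, smul_sub, one_smul]; abel
      rw [hptform, hgpeq, hgxeq, ← EReal.coe_mul, ← EReal.coe_mul, ← EReal.coe_add] at hconv
      have hgpttop : g pt ≠ ⊤ := ne_top_of_le_ne_top (EReal.coe_ne_top _) hconv
      set gpt : ℝ := (g pt).toReal with hgptdef
      have hgpteq : g pt = (gpt : EReal) := (EReal.coe_toReal hgpttop (hbot pt)).symm
      clear_value gpt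
      have hc1 : gpt ≤ (1 - t) * gp + t * gx := by
        rw [hgpteq] at hconv; exact EReal.coe_le_coe_iff.mp hconv
      have hminpt := hpmin pt hptK
      rw [hFapp, hFapp, hgpeq, hgpteq, ← EReal.coe_add, ← EReal.coe_add] at hminpt
      have hc2 : gp + ψ p ≤ gpt + ψ pt := EReal.coe_le_coe_iff.mp hminpt
      have hψpt : ψ pt = ψ p + t * ⟪d, lam • A + μ • B⟫ + t ^ 2 * χ d := by
        rw [hψapp, hψapp, hpty, hχexp, ← hBdef, ← hAdef]
      have hq' : ⟪d, q⟫ = -(⟪d, lam • A + μ • B⟫ : ℝ) := by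
        rw [hqdef, inner_neg_right]
      have hψpt' : ψ pt = ψ p - t * ⟪d, q⟫ + t ^ 2 * χ d := by
        rw [hψpt, hq']; ring
      have hcomb : t * (gp + ⟪d, q⟫) ≤ t * (gx + t * χ d) := by
        linarith [hc1, hc2, hψpt']
      exact le_of_mul_le_mul_left hcomb ht
    -- the prox of p + q is p
    set p' : X := prox (p + q) with hp'def
    have hp'top : g p' ≠ ⊤ := hproxdom _
    set gp' : ℝ := (g p').toReal with hgp'def
    have hgp'eq : g p' = (gp' : EReal) := (EReal.coe_toReal hp'top (hbot p')).symm
    clear_value gp'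
    have hpr := hprox (p + q) p
    rw [hgp'eq, hgpeq, ← EReal.coe_add, ← EReal.coe_add] at hpr
    have hpr' : gp' + ‖p' - (p + q)‖ ^ 2 / 2 ≤ gp + ‖p - (p + q)‖ ^ 2 / 2 :=
      EReal.coe_le_coe_iff.mp hpr
    have hnq : ‖p - (p + q)‖ = ‖q‖ := by rw [show p - (p + q) = -q by abel, norm_neg]
    have hsubp' : gp + ⟪p' - p, q⟫ ≤ gp' := by
      have h := hsub p' hp'top; rwa [← hgp'def] at h
    have hexp2 : ‖p' - (p + q)‖ ^ 2 = ‖p' - p‖ ^ 2 - 2 * ⟪p' - p, q⟫ + ‖q‖ ^ 2 := by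
      rw [show p' - (p + q) = (p' - p) - q by abel, norm_sub_sq_real]
    have hnq2 : ‖p - (p + q)‖ ^ 2 = ‖q‖ ^ 2 := by rw [hnq]
    have hzero : ‖p' - p‖ ^ 2 ≤ 0 := by linarith [hpr', hsubp', hexp2, hnq2]
    have hp'p : p' = p := by
      have h1 : ‖p' - p‖ ^ 2 = 0 := le_antisymm hzero (sq_nonneg _)
      exact sub_eq_zero.mp (norm_eq_zero.mp (pow_eq_zero_iff two_ne_zero |>.mp h1))
    -- assemble the element of ran (Id - T)
    refine ⟨RU (p + q), ?_⟩
    rw [hd, hRUinv, hPURU, ← hp'def, hp'p]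
    have hPUneg : ∀ x : X, PU (-x) = -PU x := fun x => by
      have h := hPUsub 0 x
      rw [hPUzero] at h
      simpa using h
    have hPUq : PU q = -(μ • B) := by
      rw [hqdef, hPUneg, hPUadd, hPUsmul, hPUsmul, hPUofperp A hAperp, hPUB, smul_zero, zero_add]
    have hePU : PU (p + q) - p = -(p - PU p) - μ • B := by
      rw [hPUadd, hPUq]; abel
    rw [hePU]
    calc ‖-(p - PU p) - μ • B‖ ≤ ‖-(p - PU p)‖ + ‖μ • B‖ := norm_sub_le _ _
    _ = ‖p - PU p‖ + μ * m := by
        rw [norm_neg, norm_smul, Real.norm_eq_abs, abs_of_pos hμpos, hmdef]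
    _ ≤ (‖y - PU y‖ + r) + μ * m := by linarith [hnormp]
    _ ≤ ‖y - PU y‖ + 2 * ε := by linarith [hr, hμm]

  -- consequence: ‖v‖ ≤ ‖y - PU y‖ for every y in the domain
  have hvle : ∀ y : X, g y ≠ ⊤ → ‖v‖ ≤ ‖y - PU y‖ := by
    intro y hy
    refine le_of_forall_pos_le_add fun ε hε => ?_
    have hε2 : 0 < min (ε / 2) 1 := lt_min (by linarith) one_pos
    obtain ⟨z, hz⟩ := hkey y hy _ hε2 (min_le_right _ _)
    have h1 : ‖v‖ ≤ ‖z - T z‖ := hve _ ⟨z, rfl⟩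
    have h2 : 2 * min (ε / 2) 1 ≤ ε := by
      have := min_le_left (ε / 2) 1; linarith
    linarith
  -- distance minimality over U - dom g
  have hperp_norm : ∀ u y : X, u ∈ U → ‖y - PU y‖ ≤ ‖u - y‖ := by
    intro u y hu
    have horth : ⟪u - PU y, PU y - y⟫ = (0 : ℝ) := by
      refine hinnerUperp _ _ (Submodule.sub_mem _ hu (hPUmem y)) ?_
      have h := hPUperp y
      have : PU y - y = -(y - PU y) := by abel
      rw [this]; exact Submodule.neg_mem _ h
    have hdecomp : u - y = (u - PU y) + (PU y - y) := by abel
    have hsq : ‖u - y‖ ^ 2 = ‖u - PU y‖ ^ 2 + ‖PU y - y‖ ^ 2 := by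
      rw [hdecomp, norm_add_sq_real, horth]; ring
    have h1 : ‖y - PU y‖ = ‖PU y - y‖ := norm_sub_rev _ _
    nlinarith [norm_nonneg (u - y), norm_nonneg (u - PU y), norm_nonneg (PU y - y),
      norm_nonneg (y - PU y)]
  set S : Set X := (U : Set X) - {z | g z ≠ ⊤} with hSdef
  have hSnorm : ∀ s ∈ S, ‖v‖ ≤ ‖s‖ := by
    intro s hs
    obtain ⟨u, hu, y, hy, rfl⟩ := hs
    exact le_trans (hvle y hy) (hperp_norm u y hu)
  have hSclos : ∀ s ∈ closure S, ‖v‖ ≤ ‖s‖ := by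
    intro s hs
    have : closure S ⊆ {x : X | ‖v‖ ≤ ‖x‖} :=
      closure_minimal hSnorm (isClosed_le continuous_const continuous_norm)
    exact this hs
  -- v belongs to closure S
  have hransub : Set.range (fun z => z - T z) ⊆ S := by
    rintro e ⟨z, rfl⟩
    exact ⟨PU z, hPUmem z, prox (RU z), hproxdom (RU z), (hd z).symm⟩
  have hvS : v ∈ closure S := closure_mono hransub hv.1
  -- convexity of S
  have hdomconv : Convex ℝ {z : X | g z ≠ ⊤} := by
    intro x hx y hy a b ha hb hab
    have h := hgconv x y a b ha hb hab
    rw [← EReal.coe_toReal hx (hbot x), ← EReal.coe_toReal hy (hbot y),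
      ← EReal.coe_mul, ← EReal.coe_mul, ← EReal.coe_add] at h
    exact ne_top_of_le_ne_top (EReal.coe_ne_top _) h
  have hSconv : Convex ℝ S := (Submodule.convex U).sub hdomconv
  -- the variational inequality over closure S
  have hvar : ∀ s ∈ closure S, ⟪s - v, 0 - v⟫ ≤ (0 : ℝ) := by
    intro s hs
    have hmain : 0 ≤ ⟪v, s - v⟫ := by
      have h := le_of_forall_small_mul (a := 2 * ⟪v, s - v⟫) (b := 0)
        (C := ‖s - v‖ ^ 2) one_pos ?_
      · linarith
      intro t ht ht1
      have hc : v + t • (s - v) ∈ closure S := by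
        have := hSconv.closure (x := v) (y := s) hvS hs (a := 1 - t) (b := t)
          (by linarith) ht.le (by ring)
        have heq : (1 - t) • v + t • s = v + t • (s - v) := by
          rw [sub_smul, smul_sub, one_smul]; abel
        rwa [heq] at this
      have h1 : ‖v‖ ≤ ‖v + t • (s - v)‖ := hSclos _ hc
      have h2 : ‖v + t • (s - v)‖ ^ 2
          = ‖v‖ ^ 2 + 2 * (t * ⟪v, s - v⟫) + t ^ 2 * ‖s - v‖ ^ 2 := by
        rw [norm_add_sq_real, real_inner_smul_right, norm_smul, Real.norm_eq_abs,
          mul_pow, sq_abs]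
      have h3 : 0 ≤ 2 * (t * ⟪v, s - v⟫) + t ^ 2 * ‖s - v‖ ^ 2 := by
        nlinarith [norm_nonneg v, norm_nonneg (v + t • (s - v))]
      have h4 : 0 ≤ 2 * ⟪v, s - v⟫ + t * ‖s - v‖ ^ 2 := by nlinarith [h3, ht]
      linarith
    rw [zero_sub, inner_neg_right, real_inner_comm]
    linarith
  refine ⟨⟨hvS, hvar⟩, ?_⟩
  -- v ∈ Uᗮ
  rw [Submodule.mem_orthogonal]
  have haux : ∀ u : X, u ∈ U → -⟪u, v⟫ ≤ (0:ℝ) := by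
    intro u hu
    have htrans : (fun x : X => u + x) '' S ⊆ S := by
      rintro _ ⟨s, hs, rfl⟩
      obtain ⟨u', hu', y, hy, rfl⟩ := hs
      exact ⟨u + u', Submodule.add_mem _ hu hu', y, hy, by abel⟩
    have hmem : u + v ∈ closure S := by
      have h1 : u + v ∈ (fun x : X => u + x) '' closure S := ⟨v, hvS, rfl⟩
      have h2 := image_closure_subset_closure_image
        (f := fun x : X => u + x) (s := S) (continuous_const.add continuous_id)
      exact closure_mono htrans (h2 h1)
    have := hvar _ hmem
    rw [add_sub_cancel_right, zero_sub, inner_neg_right] at this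
    linarith
  intro u hu
  have h1 := haux u hu
  have h2 := haux (-u) (Submodule.neg_mem _ hu)
  rw [inner_neg_left] at h2
  linarith
end
end

section
/- Let X be a real Hilbert space, U a closed linear subspace of X, g : X → (−∞,+∞] proper lower semicontinuous convex, and let v ∈ U^⊥. Define Z = {x ∈ X : v ∈ N_U(x) + ∂g(x − v)}. If Z ≠ ∅, then Z = U ∩ (v + dom ∂g) ∩ argmin(ι_U + g(· − v)) = argmin(ι_U + g(· − v)); that is, Z equals the full set of minimizers of g(· − v) over U. -/
open scoped RealInnerProductSpace Pointwise
open Filter Topology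

noncomputable section

variable {X : Type*}

/-- For `v ∈ U^⊥` and `Z = {x : v ∈ N_U(x) + ∂g(x − v)}` nonempty,
`Z = U ∩ (v + dom ∂g) ∩ argmin(ι_U + g(·−v)) = argmin(ι_U + g(·−v))`. -/
theorem normal_solutions_eq_argmin
    [NormedAddCommGroup X] [InnerProductSpace ℝ X] [CompleteSpace X]
    (U : Submodule ℝ X) (hUclosed : IsClosed (U : Set X))
    (g : X → EReal) (hgproper : EProper g) (hglsc : LowerSemicontinuous g)
    (hgconv : EConvexOn g)
    (v : X) (hv : v ∈ Uᗮ)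
    (Z : Set X)
    (hZ : Z = {x | ∃ a b : X, a ∈ normalCone U x ∧ b ∈ ESubdiff g (x - v) ∧ v = a + b})
    (hZne : Z.Nonempty) :
    Z = {x | x ∈ U ∧ (ESubdiff g (x - v)).Nonempty} ∩
        {x | x ∈ U ∧ ∀ z ∈ U, g (x - v) ≤ g (z - v)} ∧
    Z = {x | x ∈ U ∧ ∀ z ∈ U, g (x - v) ≤ g (z - v)} := by

  obtain ⟨x₀, hx₀⟩ := hZne
  rw [hZ] at hx₀
  obtain ⟨a₀, b₀, ⟨hx₀U, ha₀⟩, hb₀, hv₀⟩ := hx₀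
  have hb₀perp : b₀ ∈ Uᗮ := by
    have hb : b₀ = v - a₀ := by rw [hv₀]; abel
    rw [hb]; exact sub_mem hv ha₀
  -- any element of the normal-cone set is a minimizer with nonempty subdifferential
  have hsub : ∀ x, (∃ a b : X, a ∈ normalCone U x ∧ b ∈ ESubdiff g (x - v) ∧ v = a + b) →
      x ∈ U ∧ (ESubdiff g (x - v)).Nonempty ∧ ∀ z ∈ U, g (x - v) ≤ g (z - v) := by
    rintro x ⟨a, b, ⟨hxU, ha⟩, hb, hvab⟩
    refine ⟨hxU, ⟨b, hb⟩, fun z hz => ?_⟩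
    have hbperp : b ∈ Uᗮ := by
      have hb' : b = v - a := by rw [hvab]; abel
      rw [hb']; exact sub_mem hv ha
    have hin : ⟪(z - v) - (x - v), b⟫ = (0 : ℝ) := by
      have he : (z - v) - (x - v) = z - x := by abel
      rw [he]
      exact (Submodule.mem_orthogonal U b).mp hbperp (z - x) (sub_mem hz hxU)
    calc g (x - v) = g (x - v) + (((0 : ℝ)) : EReal) := by simp
      _ = g (x - v) + ((⟪(z - v) - (x - v), b⟫ : ℝ) : EReal) := by rw [hin]
      _ ≤ g (z - v) := hb (z - v)
  -- any minimizer over U is in the normal-cone set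
  have hmin : ∀ x, x ∈ U → (∀ z ∈ U, g (x - v) ≤ g (z - v)) →
      ∃ a b : X, a ∈ normalCone U x ∧ b ∈ ESubdiff g (x - v) ∧ v = a + b := by
    intro x hxU hm
    refine ⟨v - b₀, b₀, ⟨hxU, sub_mem hv hb₀perp⟩, ?_, by abel⟩
    intro z
    have h1 : g (x - v) ≤ g (x₀ - v) := hm x₀ hx₀U
    have hinner : ⟪z - (x - v), b₀⟫ = ⟪z - (x₀ - v), b₀⟫ := by
      have h0 : ⟪x₀ - x, b₀⟫ = (0 : ℝ) :=
        (Submodule.mem_orthogonal U b₀).mp hb₀perp (x₀ - x) (sub_mem hx₀U hxU)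
      have hd : ⟪z - (x - v), b₀⟫ - ⟪z - (x₀ - v), b₀⟫ = ⟪x₀ - x, b₀⟫ := by
        rw [← inner_sub_left]; congr 1; abel
      linarith [hd, h0]
    calc g (x - v) + ((⟪z - (x - v), b₀⟫ : ℝ) : EReal)
        = g (x - v) + ((⟪z - (x₀ - v), b₀⟫ : ℝ) : EReal) := by rw [hinner]
      _ ≤ g (x₀ - v) + ((⟪z - (x₀ - v), b₀⟫ : ℝ) : EReal) := add_le_add_left h1 _
      _ ≤ g z := hb₀ z
  constructor
  · rw [hZ]
    ext x
    constructor
    · intro hx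
      obtain ⟨h1, h2, h3⟩ := hsub x hx
      exact ⟨⟨h1, h2⟩, h1, h3⟩
    · rintro ⟨-, hxU, h3⟩
      exact hmin x hxU h3
  · rw [hZ]
    ext x
    constructor
    · intro hx
      obtain ⟨h1, -, h3⟩ := hsub x hx
      exact ⟨h1, h3⟩
    · rintro ⟨hxU, h3⟩
      exact hmin x hxU h3
end
end

section
/- Let X be a real Hilbert space, U a closed linear subspace of X, and W a nonempty closed convex subset of X. Set v = P_{closure(U − W)}(0) (which belongs to U^⊥). Define Z = {x ∈ X : v ∈ N_U(x) + N_W(x − v)}, where N_W(y) = {x* : ⟪w − y, x*⟫ ≤ 0 for all w ∈ W} if y ∈ W and ∅ otherwise. Then Z = U ∩ (v + W). -/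
open scoped RealInnerProductSpace Pointwise
open Filter Topology

noncomputable section

variable {X : Type*}

/-- the normal cone of a convex set `W`:
`N_W(y) = {x* : ⟪w − y, x*⟫ ≤ 0 for all w ∈ W}` if `y ∈ W`, and `∅` otherwise. -/
def convexNormalCone [NormedAddCommGroup X] [InnerProductSpace ℝ X]
    (W : Set X) (y : X) : Set X :=
  {xs | y ∈ W ∧ ∀ w ∈ W, ⟪w - y, xs⟫ ≤ (0 : ℝ)}

/-- **linear-convex feasibility.** With `g = ι_W`, so that
`∂g = N_W`, and `v = P_{closure (U − W)} 0` (which belongs to `U^⊥`),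
the set `Z = {x : v ∈ N_U(x) + N_W(x − v)}` equals `U ∩ (v + W)`. -/
theorem normal_solutions_feasibility
    [NormedAddCommGroup X] [InnerProductSpace ℝ X] [CompleteSpace X]
    (U : Submodule ℝ X) (hUclosed : IsClosed (U : Set X))
    (W : Set X) (hWne : W.Nonempty) (hWclosed : IsClosed W) (hWconv : Convex ℝ W)
    (v : X) (hv : IsMetricProj (closure ((U : Set X) - W)) 0 v)
    (Z : Set X)
    (hZ : Z = {x | ∃ a b : X,
      a ∈ normalCone U x ∧ b ∈ convexNormalCone W (x - v) ∧ v = a + b}) :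
    v ∈ Uᗮ ∧ Z = {x | x ∈ U ∧ x - v ∈ W} := by
  have key : ∀ u ∈ U, (0:ℝ) ≤ ⟪u, v⟫ := by
    intro u hu
    have hmem : v + u ∈ closure ((U : Set X) - W) := by
      have hmap : Set.MapsTo (fun x => x + u) ((U : Set X) - W) ((U : Set X) - W) := by
        rintro x ⟨a, ha, b, hb, rfl⟩
        exact ⟨a + u, U.add_mem ha hu, b, hb, (sub_add_eq_add_sub a b u).symm⟩
      have := map_mem_closure (continuous_add_right u) hv.1 hmap
      simpa using this
    have h := hv.2 _ hmem
    simp only [add_sub_cancel_left, zero_sub, inner_neg_right] at h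
    linarith
  have hvU : v ∈ Uᗮ := by
    rw [Submodule.mem_orthogonal]
    intro u hu
    have h1 := key u hu
    have h2 := key (-u) (U.neg_mem hu)
    rw [inner_neg_left] at h2
    linarith
  refine ⟨hvU, ?_⟩
  rw [hZ]
  ext x
  simp only [Set.mem_setOf_eq]
  constructor
  · rintro ⟨a, b, ⟨hxU, _⟩, ⟨hxvW, _⟩, _⟩
    exact ⟨hxU, hxvW⟩
  · rintro ⟨hxU, hxvW⟩
    exact ⟨v, 0, ⟨hxU, hvU⟩, ⟨hxvW, fun w hw => by simp⟩, by simp⟩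
end
end

section
/- Let X be a real Hilbert space, U a closed linear subspace, g : X → (−∞,+∞] proper lower semicontinuous convex, T = Id − P_U + Prox_g ∘ R_U, and v = P_{closure(ran(Id−T))}(0) the minimal displacement vector; assume v ∈ U^⊥. Define Z = {x : v ∈ N_U(x) + ∂g(x − v)} and F = {x ∈ X : x = T(x + v)}, and assume Z ≠ ∅ (so F is nonempty, closed, and convex). Then Z = P_U(F) and P_U ∘ P_F = P_Z. -/
open scoped RealInnerProductSpace Pointwise
open Filter Topology

noncomputable section

variable {X : Type*}

section Aux
variable [NormedAddCommGroup X] [InnerProductSpace ℝ X]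

lemma finite_of_subdiff {g : X → EReal} (hproper : EProper g) {x b : X}
    (hb : b ∈ ESubdiff g x) : ∃ r : ℝ, g x = (r : EReal) := by
  obtain ⟨hbot, x0, hx0⟩ := hproper
  refine ⟨(g x).toReal, (EReal.coe_toReal ?_ (hbot x)).symm⟩
  intro htop
  have h := hb x0
  rw [htop, EReal.top_add_coe] at h
  exact hx0 (top_le_iff.mp h)

lemma prox_finite {g : X → EReal} (hproper : EProper g) {prox : X → X}
    (hprox : IsProx g prox) (q : X) : ∃ r : ℝ, g (prox q) = (r : EReal) := by
  obtain ⟨hbot, x0, hx0⟩ := hproper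
  refine ⟨(g (prox q)).toReal, (EReal.coe_toReal ?_ (hbot _)).symm⟩
  intro htop
  have h := hprox q x0
  rw [htop, EReal.top_add_coe] at h
  have hgx0 : g x0 = ((g x0).toReal : EReal) := (EReal.coe_toReal hx0 (hbot x0)).symm
  rw [hgx0, ← EReal.coe_add] at h
  exact EReal.coe_ne_top _ (top_le_iff.mp h)

lemma prox_eq_of_subdiff {g : X → EReal} (hproper : EProper g)
    {prox : X → X} (hprox : IsProx g prox) {q p : X}
    (hsub : q - p ∈ ESubdiff g p) : prox q = p := by
  obtain ⟨gp, hgp⟩ := finite_of_subdiff hproper hsub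
  obtain ⟨gx, hgx⟩ := prox_finite hproper hprox q
  have h1 := hprox q p
  have h2 := hsub (prox q)
  rw [hgp, hgx, ← EReal.coe_add, ← EReal.coe_add, EReal.coe_le_coe_iff] at h1
  rw [hgp, hgx, ← EReal.coe_add, EReal.coe_le_coe_iff] at h2
  have hexp : ‖prox q - q‖ ^ 2 = ‖prox q - p‖ ^ 2 + 2 * ⟪prox q - p, p - q⟫ + ‖p - q‖ ^ 2 := by
    have h : prox q - q = (prox q - p) + (p - q) := by abel
    rw [h, norm_add_sq_real]
  have hip : ⟪prox q - p, q - p⟫ = -⟪prox q - p, p - q⟫ := by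
    rw [← inner_neg_right]
    congr 1
    abel
  have hnn : ‖prox q - p‖ ^ 2 ≤ 0 := by nlinarith
  have : prox q - p = 0 := by
    have := le_antisymm hnn (sq_nonneg _)
    simpa [pow_eq_zero_iff] using this
  exact sub_eq_zero.mp this

lemma subdiff_of_prox {g : X → EReal} (hproper : EProper g) (hconv : EConvexOn g)
    {prox : X → X} (hprox : IsProx g prox) (q : X) :
    q - prox q ∈ ESubdiff g (prox q) := by
  obtain ⟨gp, hgp⟩ := prox_finite hproper hprox q
  intro z
  by_cases hz : g z = ⊤
  · rw [hz]; exact le_top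
  have hgz : g z = ((g z).toReal : EReal) := (EReal.coe_toReal hz (hproper.1 z)).symm
  set gz : ℝ := (g z).toReal with hgzdef
  set p := prox q with hp
  have key : ∀ t : ℝ, 0 < t → t ≤ 1 →
      gp ≤ gz + ⟪p - q, z - p⟫ + t * (‖z - p‖ ^ 2 / 2) := by
    intro t ht ht1
    have hconv' := hconv p z (1 - t) t (by linarith) ht.le (by ring)
    have hprox' := hprox q ((1 - t) • p + t • z)
    have hyt : (1 - t) • p + t • z = p + t • (z - p) := by
      rw [smul_sub, sub_smul, one_smul]; abel
    have hnorm : ‖p + t • (z - p) - q‖ ^ 2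
        = ‖p - q‖ ^ 2 + 2 * t * ⟪p - q, z - p⟫ + t ^ 2 * ‖z - p‖ ^ 2 := by
      have h : p + t • (z - p) - q = (p - q) + t • (z - p) := by abel
      rw [h, norm_add_sq_real, real_inner_smul_right, norm_smul]
      rw [mul_pow, Real.norm_eq_abs, sq_abs]
      ring
    have hcv : g ((1 - t) • p + t • z) ≤ (((1 - t) * gp + t * gz : ℝ) : EReal) := by
      calc g ((1 - t) • p + t • z) ≤ ((1 - t : ℝ) : EReal) * g p + ((t : ℝ) : EReal) * g z :=
            hconv'
        _ = (((1 - t) * gp + t * gz : ℝ) : EReal) := by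
            rw [hgp, hgz, ← EReal.coe_mul, ← EReal.coe_mul, ← EReal.coe_add]
    have hchain : ((gp + ‖p - q‖ ^ 2 / 2 : ℝ) : EReal)
        ≤ (((1 - t) * gp + t * gz + ‖p + t • (z - p) - q‖ ^ 2 / 2 : ℝ) : EReal) := by
      calc ((gp + ‖p - q‖ ^ 2 / 2 : ℝ) : EReal)
          = g p + ((‖p - q‖ ^ 2 / 2 : ℝ) : EReal) := by rw [hgp, EReal.coe_add]
        _ ≤ g ((1 - t) • p + t • z) + ((‖(1 - t) • p + t • z - q‖ ^ 2 / 2 : ℝ) : EReal) :=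
            hprox'
        _ ≤ (((1 - t) * gp + t * gz : ℝ) : EReal)
              + ((‖p + t • (z - p) - q‖ ^ 2 / 2 : ℝ) : EReal) := by
            rw [hyt] at hcv ⊢
            exact add_le_add_left hcv _
        _ = (((1 - t) * gp + t * gz + ‖p + t • (z - p) - q‖ ^ 2 / 2 : ℝ) : EReal) := by
            norm_cast
    rw [EReal.coe_le_coe_iff, hnorm] at hchain
    nlinarith
  have hfin : gp ≤ gz + ⟪p - q, z - p⟫ := by
    refine le_of_forall_pos_le_add ?_
    intro ε hε
    set c : ℝ := ‖z - p‖ ^ 2 / 2 with hc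
    have hc0 : 0 ≤ c := by positivity
    have ht0 : 0 < min 1 (ε / (c + 1)) := by
      apply lt_min one_pos
      positivity
    have := key (min 1 (ε / (c + 1))) ht0 (min_le_left _ _)
    have htc : min 1 (ε / (c + 1)) * c ≤ ε := by
      have h1 : min 1 (ε / (c + 1)) ≤ ε / (c + 1) := min_le_right _ _
      have h2 : min 1 (ε / (c + 1)) * c ≤ (ε / (c + 1)) * c := by
        apply mul_le_mul_of_nonneg_right h1 hc0
      have h3 : (ε / (c + 1)) * c ≤ ε := by
        rw [div_mul_eq_mul_div, div_le_iff₀ (by linarith)]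
        nlinarith
      linarith
    linarith
  rw [hgp, hgz, ← EReal.coe_add, EReal.coe_le_coe_iff]
  have hip : ⟪z - p, q - p⟫ = -⟪p - q, z - p⟫ := by
    rw [real_inner_comm, ← inner_neg_left]
    congr 1
    abel
  rw [hip]
  linarith

lemma subdiff_transfer {g : X → EReal} (hproper : EProper g)
    {x1 x2 b1 b2 : X} (h1 : b1 ∈ ESubdiff g x1) (h2 : b2 ∈ ESubdiff g x2)
    (horth : ⟪x2 - x1, b1 - b2⟫ = (0 : ℝ)) : b2 ∈ ESubdiff g x1 := by
  obtain ⟨g1, hg1⟩ := finite_of_subdiff hproper h1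
  obtain ⟨g2, hg2⟩ := finite_of_subdiff hproper h2
  have h12 := h1 x2
  rw [hg1, hg2, ← EReal.coe_add, EReal.coe_le_coe_iff] at h12
  intro w
  have hw := h2 w
  rw [hg2] at hw
  rw [hg1]
  have heq : ⟪x2 - x1, b1⟫ = ⟪x2 - x1, b2⟫ := by
    rw [inner_sub_right] at horth
    linarith
  have hsplit : ⟪w - x1, b2⟫ = ⟪w - x2, b2⟫ + ⟪x2 - x1, b2⟫ := by
    rw [← inner_add_left]
    congr 1
    abel
  calc (↑g1 : EReal) + (↑⟪w - x1, b2⟫ : EReal)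
      ≤ (↑g2 : EReal) + (↑⟪w - x2, b2⟫ : EReal) := by
        rw [← EReal.coe_add, ← EReal.coe_add, EReal.coe_le_coe_iff]
        linarith [heq, hsplit, h12]
    _ ≤ g w := hw

end Aux

/-- For the Douglas–Rachford operator `T = Id − P_U + Prox_g ∘ R_U`
with minimal displacement vector `v ∈ U^⊥`, nonempty normal solution set
`Z = {x : v ∈ N_U(x) + ∂g(x − v)}` and generalized fixed point set
`F = {x : x = T(x + v)}`, one has `Z = P_U(F)` and `P_U ∘ P_F = P_Z`. -/
theorem Z_eq_PU_image_F_and_proj_identity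
    [NormedAddCommGroup X] [InnerProductSpace ℝ X] [CompleteSpace X]
    (U : Submodule ℝ X) (hUclosed : IsClosed (U : Set X)) [Submodule.HasOrthogonalProjection U]
    (g : X → EReal) (hgproper : EProper g) (hglsc : LowerSemicontinuous g)
    (hgconv : EConvexOn g)
    (prox : X → X) (hprox : IsProx g prox)
    (PU RU T : X → X)
    (hPU : ∀ z, PU z = (U.orthogonalProjectionOnto z : X))
    (hRU : ∀ z, RU z = 2 • PU z - z)
    (hT : ∀ z, T z = z - PU z + prox (RU z))
    (v : X)
    (hv : IsMetricProj (closure (Set.range fun z => z - T z)) 0 v)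
    (hvU : v ∈ Uᗮ)
    (Z : Set X)
    (hZ : Z = {x | ∃ a b : X, a ∈ normalCone U x ∧ b ∈ ESubdiff g (x - v) ∧ v = a + b})
    (hZne : Z.Nonempty)
    (F : Set X) (hF : F = {x | x = T (x + v)}) :
    Z = PU '' F ∧
    ∀ x pF pZ : X, IsMetricProj F x pF → IsMetricProj Z x pZ → PU pF = pZ := by
  -- basic projection facts
  have hPUmem : ∀ x : X, PU x ∈ U := by
    intro x; rw [hPU]; exact (U.orthogonalProjectionOnto x).2
  have hPUself : ∀ u ∈ U, PU u = u := by
    intro u hu; rw [hPU]; exact Submodule.starProjection_eq_self_iff.mpr hu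
  have hPUperp : ∀ w ∈ Uᗮ, PU w = (0 : X) := by
    intro w hw; rw [hPU, Submodule.orthogonalProjectionOnto_apply_of_mem_orthogonal hw]
    simp
  have hPUadd : ∀ x y : X, PU (x + y) = PU x + PU y := by
    intro x y; simp only [hPU, map_add, Submodule.coe_add]
  have hPUsub : ∀ x y : X, PU (x - y) = PU x - PU y := by
    intro x y; simp only [hPU, map_sub, Submodule.coe_sub]
  have hsubperp : ∀ x : X, x - PU x ∈ Uᗮ := by
    intro x; rw [hPU]; exact Submodule.sub_starProjection_mem_orthogonal x
  -- characterization of F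
  have hFiff : ∀ x : X, x ∈ F ↔ (PU x - x) ∈ ESubdiff g (PU x - v) := by
    intro x
    have hPUxv : PU (x + v) = PU x := by
      rw [hPUadd, hPUperp v hvU, add_zero]
    have hTx : T (x + v) = x + v - PU x + prox (2 • PU x - (x + v)) := by
      rw [hT, hRU, hPUxv]
    have hqp : (2 • PU x - (x + v)) - (PU x - v) = PU x - x := by
      rw [two_smul]; abel
    rw [hF]
    simp only [Set.mem_setOf_eq]
    constructor
    · intro hx
      have hpe : prox (2 • PU x - (x + v)) = PU x - v := by
        have h2 : x = x + v - PU x + prox (2 • PU x - (x + v)) := by rw [← hTx]; exact hx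
        have := sub_eq_zero.mpr h2.symm
        have h3 : prox (2 • PU x - (x + v)) - (PU x - v) = 0 := by
          rw [← this]; abel
        have := sub_eq_zero.mp h3
        exact this
      have hsp := subdiff_of_prox hgproper hgconv hprox (2 • PU x - (x + v))
      rw [hpe, hqp] at hsp
      exact hsp
    · intro hx
      have hpe : prox (2 • PU x - (x + v)) = PU x - v :=
        prox_eq_of_subdiff hgproper hprox (by rw [hqp]; exact hx)
      rw [hTx, hpe]; abel
  -- membership of PU f in Z for f in F
  have hPUF_mem_Z : ∀ f ∈ F, PU f ∈ Z := by
    intro f hf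
    rw [hZ]
    refine ⟨v - (PU f - f), PU f - f, ⟨hPUmem f, ?_⟩, hFiff f |>.mp hf, by abel⟩
    have h1 : PU f - f ∈ Uᗮ := by
      have := hsubperp f
      have h2 : PU f - f = -(f - PU f) := by abel
      rw [h2]; exact neg_mem this
    exact sub_mem hvU h1
  have hbperpF : ∀ f : X, PU f - f ∈ Uᗮ := by
    intro f
    have h2 : PU f - f = -(f - PU f) := by abel
    rw [h2]; exact neg_mem (hsubperp f)
  constructor
  · -- Z = PU '' F
    apply Set.eq_of_subset_of_subset
    · intro z hz
      rw [hZ] at hz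
      obtain ⟨a, b, ⟨hzU, haperp⟩, hb, hvab⟩ := hz
      have hbperp : b ∈ Uᗮ := by
        have : b = v - a := by rw [hvab]; abel
        rw [this]; exact sub_mem hvU haperp
      refine ⟨z - b, ?_, ?_⟩
      · have hPUx : PU (z - b) = z := by
          rw [hPUsub, hPUself z hzU, hPUperp b hbperp, sub_zero]
        rw [hFiff, hPUx]
        have : z - (z - b) = b := by abel
        rw [this]
        exact hb
      · rw [hPUsub, hPUself z hzU, hPUperp b hbperp, sub_zero]
    · rintro z ⟨f, hf, rfl⟩
      exact hPUF_mem_Z f hf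
  · -- projection identity
    intro x pF pZ hpF hpZ
    set z : X := PU pF with hzdef
    have hb : (z - pF) ∈ ESubdiff g (z - v) := (hFiff pF).mp hpF.1
    have hbperp : z - pF ∈ Uᗮ := hbperpF pF
    have hzZ : z ∈ Z := hPUF_mem_Z pF hpF.1
    have key : ∀ s ∈ Z, ⟪s - z, x - z⟫ ≤ (0 : ℝ) := by
      intro s hs
      have hsmem := hs
      rw [hZ] at hsmem
      obtain ⟨a, bs, ⟨hsU, haperp⟩, hbs, hvab⟩ := hsmem
      have hbsperp : bs ∈ Uᗮ := by
        have : bs = v - a := by rw [hvab]; abel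
        rw [this]; exact sub_mem hvU haperp
      have horth : ⟪(z - v) - (s - v), bs - (z - pF)⟫ = (0 : ℝ) := by
        have h1 : (z - v) - (s - v) = z - s := by abel
        rw [h1]
        exact Submodule.inner_right_of_mem_orthogonal
          (sub_mem (hPUmem pF) hsU) (sub_mem hbsperp hbperp)
      have hbsub : (z - pF) ∈ ESubdiff g (s - v) :=
        subdiff_transfer hgproper hbs hb horth
      have hfF : s - (z - pF) ∈ F := by
        have hPUf : PU (s - (z - pF)) = s := by
          rw [hPUsub, hPUself s hsU, hPUperp _ hbperp, sub_zero]
        rw [hFiff, hPUf]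
        have : s - (s - (z - pF)) = z - pF := by abel
        rw [this]
        exact hbsub
      have hineq := hpF.2 _ hfF
      have h1 : s - (z - pF) - pF = s - z := by abel
      have h2 : x - pF = (x - z) + (z - pF) := by abel
      rw [h1, h2, inner_add_right] at hineq
      have h3 : ⟪s - z, z - pF⟫ = (0 : ℝ) :=
        Submodule.inner_right_of_mem_orthogonal (sub_mem hsU (hPUmem pF)) hbperp
      linarith
    -- uniqueness
    have h1 := key pZ hpZ.1
    have h2 := hpZ.2 z hzZ
    have h3 : ⟪pZ - z, pZ - z⟫ ≤ (0 : ℝ) := by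
      have e1 : pZ - z = (x - z) - (x - pZ) := by abel
      nth_rewrite 2 [e1]
      rw [inner_sub_right]
      have e2 : ⟪pZ - z, x - pZ⟫ = -⟪z - pZ, x - pZ⟫ := by
        rw [← inner_neg_left]; congr 1; abel
      linarith [e2, h1, h2]
    have : pZ - z = 0 := real_inner_self_nonpos.mp h3
    have := sub_eq_zero.mp this
    exact this.symm
end
end

section
/- Let X be a real Hilbert space, U a closed linear subspace, g : X → (−∞,+∞] proper lower semicontinuous convex, T = Id − P_U + Prox_g ∘ R_U, and v = P_{closure(ran(Id−T))}(0); assume v ∈ U^⊥ and that F = {x : x = T(x + v)} is nonempty. Let x ∈ X. Then: (i) P_U T^n x − Prox_g(R_U T^n x) = T^n x − T^{n+1} x → v (strongly) as n → ∞; (ii) P_U T^n x − P_U T^{n+1} x → 0; (iii) −P_{U^⊥} Prox_g(R_U T^n x) = P_{U^⊥} T^n x − P_{U^⊥} T^{n+1} x → v; (iv) every weak cluster point of (P_U T^n x) lies in U ∩ (v + closure(dom g)); (v) the sequences (nv + T^n x), (P_U T^n x), and (Prox_g(R_U T^n x)) are bounded. -/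
open scoped RealInnerProductSpace Pointwise
open Filter Topology

noncomputable section

variable {X : Type*}

lemma prox_ne_top' [NormedAddCommGroup X] [InnerProductSpace ℝ X]
    {g : X → EReal} {prox : X → X} (hp : EProper g) (h : IsProx g prox)
    (a : X) : g (prox a) ≠ ⊤ := by
  obtain ⟨x0, hx0⟩ := hp.2
  intro htop
  have h1 := h a x0
  rw [htop] at h1
  have h2 : g x0 + ((‖x0 - a‖ ^ 2 / 2 : ℝ) : EReal) < ⊤ :=
    EReal.add_lt_top hx0 (EReal.coe_ne_top _)
  have h3 : (⊤ : EReal) + ((‖prox a - a‖ ^ 2 / 2 : ℝ) : EReal) = ⊤ := by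
    rw [EReal.top_add_of_ne_bot (EReal.coe_ne_bot _)]
  rw [h3] at h1
  exact absurd (top_le_iff.1 h1) (by exact fun he => absurd (he ▸ h2) (lt_irrefl _))

lemma prox_fne' [NormedAddCommGroup X] [InnerProductSpace ℝ X]
    {g : X → EReal} {prox : X → X} (hp : EProper g) (hc : EConvexOn g)
    (h : IsProx g prox) (a b : X) :
    ‖prox a - prox b‖ ^ 2 ≤ ⟪prox a - prox b, a - b⟫ := by
  set p := prox a with hpdef
  set q := prox b with hqdef
  obtain ⟨ra, hraeq⟩ : ∃ r : ℝ, g p = (r : EReal) := by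
    lift g p to ℝ using ⟨prox_ne_top' hp h a, hp.1 _⟩ with r hr
    exact ⟨r, rfl⟩
  obtain ⟨rb, hrbeq⟩ : ∃ r : ℝ, g q = (r : EReal) := by
    lift g q to ℝ using ⟨prox_ne_top' hp h b, hp.1 _⟩ with r hr
    exact ⟨r, rfl⟩
  have key : ∀ t : ℝ, 0 < t → t ≤ 1 → ∀ u w : X, ∀ ru rw : ℝ, g (prox u) = ru → g (prox w) = rw →
      t * (ru - rw) ≤ t * ⟪prox u - u, prox w - prox u⟫ + t^2 * ‖prox w - prox u‖^2 / 2 := by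
    intro t ht ht1 u w ru rw hru hrw
    set pu := prox u
    set pw := prox w
    have hmid := h u ((1 - t) • pu + t • pw)
    have hconv := hc pu pw (1 - t) t (by linarith) (le_of_lt ht) (by ring)
    have hrhs : ((1 - t : ℝ) : EReal) * g pu + (t : EReal) * g pw
        = (((1 - t) * ru + t * rw : ℝ) : EReal) := by
      rw [hru, hrw, ← EReal.coe_mul, ← EReal.coe_mul, ← EReal.coe_add]
    have hchain : (ru : EReal) + ((‖pu - u‖ ^ 2 / 2 : ℝ) : EReal) ≤
        (((1 - t) * ru + t * rw : ℝ) : EReal) + ((‖(1 - t) • pu + t • pw - u‖ ^ 2 / 2 : ℝ) : EReal) := by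
      rw [← hru]
      refine le_trans hmid ?_
      exact add_le_add (hrhs ▸ hconv) le_rfl
    rw [← EReal.coe_add, ← EReal.coe_add, EReal.coe_le_coe_iff] at hchain
    have hexp : (1 - t) • pu + t • pw - u = (pu - u) + t • (pw - pu) := by
      rw [sub_smul, one_smul, smul_sub]; abel
    rw [hexp] at hchain
    have hnorm : ‖(pu - u) + t • (pw - pu)‖^2
        = ‖pu - u‖^2 + 2 * (t * ⟪pu - u, pw - pu⟫) + t^2 * ‖pw - pu‖^2 := by
      rw [norm_add_sq_real, real_inner_smul_right, norm_smul, Real.norm_eq_abs, mul_pow, sq_abs]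
    rw [hnorm] at hchain
    nlinarith [hchain]
  have e1 : ⟪p - a, q - p⟫ + ⟪q - b, p - q⟫ = ⟪p - q, a - b⟫ - ‖p - q‖^2 := by
    rw [← real_inner_self_eq_norm_sq]
    simp only [inner_sub_left, inner_sub_right]
    simp [real_inner_comm]
    ring
  have hlim : ∀ t : ℝ, 0 < t → t ≤ 1 →
      ‖p - q‖^2 - ⟪p - q, a - b⟫ ≤ t * ‖p - q‖^2 := by
    intro t ht ht1
    have h1 := key t ht ht1 a b ra rb hraeq hrbeq
    have h2 := key t ht ht1 b a rb ra hrbeq hraeq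
    have hrev : ‖q - p‖ = ‖p - q‖ := norm_sub_rev _ _
    rw [hrev] at h1
    nlinarith [h1, h2, e1, ht]
  by_contra hlt
  push_neg at hlt
  have hCD : 0 < ‖p - q‖^2 - ⟪p - q, a - b⟫ := by linarith
  have hC : 0 < ‖p - q‖^2 := by
    rcases (sq_nonneg ‖p - q‖).lt_or_eq with h' | h'
    · exact h'
    · have := hlim 1 one_pos le_rfl; rw [← h'] at this ⊢; linarith
  set C := ‖p - q‖^2
  set D := ⟪p - q, a - b⟫
  have ht0 : 0 < min 1 ((C - D)/(2*C)) := lt_min one_pos (by positivity)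
  have := hlim _ ht0 (min_le_left _ _)
  have h5 : min 1 ((C - D)/(2*C)) * C ≤ ((C - D)/(2*C)) * C :=
    mul_le_mul_of_nonneg_right (min_le_right _ _) (le_of_lt hC)
  have h6 : ((C - D)/(2*C)) * C = (C - D)/2 := by field_simp
  linarith

set_option maxHeartbeats 2000000 in
/-- Basic dynamic properties of the Douglas–Rachford iteration
`T = Id − P_U + Prox_g ∘ R_U` with minimal displacement vector `v ∈ U^⊥` and
`F = {z : z = T(z + v)}` nonempty. Here `Q = Id − P_U` is the projector onto `U^⊥`. -/
theorem DR_dynamic_properties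
    [NormedAddCommGroup X] [InnerProductSpace ℝ X] [CompleteSpace X]
    (U : Submodule ℝ X) (hUclosed : IsClosed (U : Set X)) [U.HasOrthogonalProjection]
    (g : X → EReal) (hgproper : EProper g) (hglsc : LowerSemicontinuous g)
    (hgconv : EConvexOn g)
    (prox : X → X) (hprox : IsProx g prox)
    (PU RU Q T : X → X)
    (hPU : ∀ z, PU z = (U.orthogonalProjectionOnto z : X))
    (hRU : ∀ z, RU z = 2 • PU z - z)
    (hQ : ∀ z, Q z = z - PU z)
    (hT : ∀ z, T z = z - PU z + prox (RU z))
    (v : X)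
    (hv : IsMetricProj (closure (Set.range fun z => z - T z)) 0 v)
    (hvU : v ∈ Uᗮ)
    (F : Set X) (hF : F = {z | z = T (z + v)}) (hFne : F.Nonempty)
    (x : X) :
    -- (i)
    ((∀ n : ℕ, PU (T^[n] x) - prox (RU (T^[n] x)) = T^[n] x - T^[n+1] x) ∧
      Tendsto (fun n : ℕ => T^[n] x - T^[n+1] x) atTop (𝓝 v)) ∧
    -- (ii)
    Tendsto (fun n : ℕ => PU (T^[n] x) - PU (T^[n+1] x)) atTop (𝓝 0) ∧
    -- (iii)
    ((∀ n : ℕ, -(Q (prox (RU (T^[n] x)))) = Q (T^[n] x) - Q (T^[n+1] x)) ∧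
      Tendsto (fun n : ℕ => Q (T^[n] x) - Q (T^[n+1] x)) atTop (𝓝 v)) ∧
    -- (iv)
    (∀ c : X, IsWeakClusterPt (fun n : ℕ => PU (T^[n] x)) c →
      c ∈ U ∧ c - v ∈ closure {z : X | g z ≠ ⊤}) ∧
    -- (v)
    (∃ M : ℝ, ∀ n : ℕ, ‖(n : ℝ) • v + T^[n] x‖ ≤ M) ∧
    (∃ M : ℝ, ∀ n : ℕ, ‖PU (T^[n] x)‖ ≤ M) ∧
    (∃ M : ℝ, ∀ n : ℕ, ‖prox (RU (T^[n] x))‖ ≤ M) := by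
  obtain ⟨z, hzF⟩ := hFne
  rw [hF] at hzF
  have hz : z = T (z + v) := hzF
  set Pc : X →L[ℝ] X := U.subtypeL.comp (U.orthogonalProjectionOnto) with hPcdef
  have hPc : ∀ w, PU w = Pc w := fun w => hPU w
  have hPmem : ∀ w : X, Pc w ∈ U := fun w => by
    simp only [hPcdef, ContinuousLinearMap.comp_apply, Submodule.subtypeL_apply]
    exact (U.orthogonalProjectionOnto w).2
  have hPinner : ∀ w : X, ⟪Pc w, w⟫ = ‖Pc w‖^2 := by
    intro w
    have h := U.starProjection_inner_eq_zero w (U.orthogonalProjectionOnto w : X)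
      (U.orthogonalProjectionOnto w).2
    rw [Submodule.starProjection_apply, inner_sub_left] at h
    simp only [hPcdef, ContinuousLinearMap.comp_apply, Submodule.subtypeL_apply]
    rw [real_inner_comm, ← real_inner_self_eq_norm_sq]
    linarith
  have hPidem : ∀ w : X, Pc (Pc w) = Pc w := by
    intro w
    simp only [hPcdef, ContinuousLinearMap.comp_apply, Submodule.subtypeL_apply]
    rw [Submodule.orthogonalProjectionOnto_mem_subspace_eq_self]
  have hPv : Pc v = 0 := by
    simp only [hPcdef, ContinuousLinearMap.comp_apply, Submodule.subtypeL_apply]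
    rw [Submodule.orthogonalProjectionOnto_apply_of_mem_orthogonal hvU]
    rfl
  have hPnorm : ∀ w : X, ‖Pc w‖ ≤ ‖w‖ := by
    intro w
    nlinarith [hPinner w, real_inner_le_norm (Pc w) w, norm_nonneg (Pc w), norm_nonneg w]
  have hfneP : ∀ a b : X, ‖prox a - prox b‖^2 ≤ ⟪prox a - prox b, a - b⟫ :=
    prox_fne' hgproper hgconv hprox
  have hRd : ∀ a b : X, RU a - RU b = Pc (a - b) + (Pc (a - b) - (a - b)) := by
    intro a b
    rw [hRU, hRU, hPc, hPc, two_smul, two_smul, map_sub]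
    abel
  have hTfne : ∀ a b : X, ‖T a - T b‖^2 + ‖(a - T a) - (b - T b)‖^2 ≤ ‖a - b‖^2 := by
    intro a b
    have hs : ‖prox (RU a) - prox (RU b)‖^2 ≤ ⟪prox (RU a) - prox (RU b), RU a - RU b⟫ :=
      hfneP (RU a) (RU b)
    set s := prox (RU a) - prox (RU b) with hsdef
    set u := a - b with hudef
    set m := Pc (a - b) with hmdef
    have hTab : T a - T b = (u - m) + s := by
      rw [hT a, hT b, hPc, hPc, hsdef, hudef, hmdef, map_sub]
      abel
    have hSab : (a - T a) - (b - T b) = m - s := by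
      rw [hT a, hT b, hPc, hPc, hsdef, hmdef, map_sub]
      abel
    rw [hTab, hSab]
    have h1 : ‖(u - m) + s‖^2 = ‖u - m‖^2 + 2*⟪u - m, s⟫ + ‖s‖^2 := norm_add_sq_real _ _
    have h2 : ‖u - m‖^2 = ‖u‖^2 - 2*⟪u, m⟫ + ‖m‖^2 := norm_sub_sq_real _ _
    have h3 : ‖m - s‖^2 = ‖m‖^2 - 2*⟪m, s⟫ + ‖s‖^2 := norm_sub_sq_real _ _
    have h4 : ⟪u - m, s⟫ = ⟪u, s⟫ - ⟪m, s⟫ := inner_sub_left _ _ _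
    have h5 : ⟪s, RU a - RU b⟫ = 2*⟪m, s⟫ - ⟪u, s⟫ := by
      rw [hRd a b, ← hudef, ← hmdef, inner_add_right, inner_sub_right,
        real_inner_comm s m, real_inner_comm s u]
      ring
    have h6 : ⟪u, m⟫ = ‖m‖^2 := by rw [real_inner_comm]; exact hPinner u
    rw [h5] at hs
    linarith
  set y := z + v with hydef
  have hTy : T y = y - v := by
    rw [hydef, ← hz, add_sub_cancel_right]
  have hsucc : ∀ n : ℕ, T^[n+1] x = T (T^[n] x) := fun n => Function.iterate_succ_apply' T n x
  have hid : ∀ n : ℕ, PU (T^[n] x) - prox (RU (T^[n] x)) = T^[n] x - T^[n+1] x := by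
    intro n
    rw [hsucc n, hT (T^[n] x)]
    abel
  set e : ℕ → X := fun n => T^[n] x - T^[n+1] x with hedef
  have hproj : ∀ n : ℕ, 0 ≤ ⟪e n - v, v⟫ := by
    intro n
    have hmem : e n ∈ closure (Set.range fun w => w - T w) := by
      refine subset_closure ⟨T^[n] x, ?_⟩
      simp only [hedef]
      rw [hsucc n]
    have h := hv.2 (e n) hmem
    rw [zero_sub, inner_neg_right] at h
    linarith
  set d : ℕ → ℝ := fun n => ‖T^[n] x + (n:ℝ) • v - y‖^2 with hddef
  have hkey : ∀ n : ℕ, d (n+1) + ‖e n - v‖^2 ≤ d n := by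
    intro n
    have hfne := hTfne (T^[n] x) y
    rw [hTy, ← hsucc n] at hfne
    have h1 : y - (y - v) = v := sub_sub_cancel y v
    rw [h1] at hfne
    have hpr := hproj n
    have hA : T^[n+1] x + ((n+1:ℕ):ℝ) • v - y = (T^[n+1] x - (y - v)) + (n:ℝ) • v := by
      push_cast
      rw [add_smul, one_smul]
      abel
    have hB : T^[n] x + (n:ℝ) • v - y = (T^[n] x - y) + (n:ℝ) • v := by abel
    have hnA : ‖(T^[n+1] x - (y - v)) + (n:ℝ) • v‖^2
        = ‖T^[n+1] x - (y - v)‖^2 + 2*((n:ℝ)*⟪T^[n+1] x - (y - v), v⟫) + (n:ℝ)^2*‖v‖^2 := by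
      rw [norm_add_sq_real, real_inner_smul_right, norm_smul, Real.norm_eq_abs, mul_pow, sq_abs]
    have hnB : ‖(T^[n] x - y) + (n:ℝ) • v‖^2
        = ‖T^[n] x - y‖^2 + 2*((n:ℝ)*⟪T^[n] x - y, v⟫) + (n:ℝ)^2*‖v‖^2 := by
      rw [norm_add_sq_real, real_inner_smul_right, norm_smul, Real.norm_eq_abs, mul_pow, sq_abs]
    have hBA : ⟪T^[n] x - y, v⟫ - ⟪T^[n+1] x - (y - v), v⟫ = ⟪e n - v, v⟫ := by
      rw [← inner_sub_left]
      congr 1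
      simp only [hedef]
      abel
    have hEn : e n - v = (T^[n] x - T^[n+1] x) - v := by simp only [hedef]
    simp only [hddef]
    rw [hA, hB, hnA, hnB]
    have hfne2 : ‖T^[n+1] x - (y - v)‖^2 + ‖e n - v‖^2 ≤ ‖T^[n] x - y‖^2 := by
      rw [hEn]
      exact hfne
    have hn0 : (0:ℝ) ≤ (n:ℝ) := Nat.cast_nonneg n
    nlinarith [hfne2, hpr, hBA, hn0, mul_nonneg hn0 hpr]
  have hdanti : Antitone d := antitone_nat_of_succ_le fun n => by
    nlinarith [hkey n, sq_nonneg ‖e n - v‖]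
  have hdpos : ∀ n, 0 ≤ d n := fun n => sq_nonneg _
  have hdlim : Tendsto d atTop (𝓝 (⨅ n, d n)) :=
    tendsto_atTop_ciInf hdanti ⟨0, by rintro r ⟨n, rfl⟩; exact hdpos n⟩
  have hdiff : Tendsto (fun n => d n - d (n+1)) atTop (𝓝 0) := by
    have h2 : Tendsto (fun n => d (n+1)) atTop (𝓝 (⨅ n, d n)) :=
      hdlim.comp (tendsto_add_atTop_nat 1)
    simpa using hdlim.sub h2
  have hesq : Tendsto (fun n => ‖e n - v‖^2) atTop (𝓝 0) :=
    squeeze_zero (fun n => sq_nonneg _) (fun n => by linarith [hkey n]) hdiff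
  have he : Tendsto e atTop (𝓝 v) := by
    have hs := (Real.continuous_sqrt.tendsto 0).comp hesq
    have hs2 : Tendsto (fun n => ‖e n - v‖) atTop (𝓝 0) := by
      have := hs.congr fun n => Real.sqrt_sq (norm_nonneg (e n - v))
      simpa using this
    exact tendsto_sub_nhds_zero_iff.mp (tendsto_zero_iff_norm_tendsto_zero.mpr hs2)
  have hc0 : ∀ n : ℕ, ‖T^[n] x + (n:ℝ) • v - y‖ ≤ ‖x - y‖ := by
    intro n
    have h1 : d n ≤ d 0 := hdanti (Nat.zero_le n)
    have h2 : d 0 = ‖x - y‖^2 := by simp [hddef]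
    have h3 : ‖T^[n] x + (n:ℝ) • v - y‖^2 ≤ ‖x - y‖^2 := by
      rw [← h2]; exact h1
    exact (pow_le_pow_iff_left₀ (norm_nonneg _) (norm_nonneg _) two_ne_zero).1 h3
  have hb1 : ∀ n : ℕ, ‖(n:ℝ) • v + T^[n] x‖ ≤ ‖x - y‖ + ‖y‖ := by
    intro n
    have h3 : (n:ℝ) • v + T^[n] x = (T^[n] x + (n:ℝ) • v - y) + y := by abel
    rw [h3]
    exact le_trans (norm_add_le _ _) (by linarith [hc0 n])
  have hen : ∀ n : ℕ, ‖e n‖ ≤ 2*‖x - y‖ + ‖v‖ := by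
    intro n
    have h5 : e n = ((T^[n] x + (n:ℝ) • v - y) - (T^[n+1] x + ((n+1:ℕ):ℝ) • v - y)) + v := by
      simp only [hedef]
      push_cast
      rw [add_smul, one_smul]
      abel
    rw [h5]
    refine le_trans (norm_add_le _ _) ?_
    have := norm_sub_le (T^[n] x + (n:ℝ) • v - y) (T^[n+1] x + ((n+1:ℕ):ℝ) • v - y)
    have hc1 := hc0 n
    have hc2 := hc0 (n+1)
    linarith
  refine ⟨⟨hid, ?_⟩, ?_, ⟨?_, ?_⟩, ?_, ⟨‖x - y‖ + ‖y‖, hb1⟩, ⟨‖x - y‖ + ‖y‖, ?_⟩,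
    ⟨(‖x - y‖ + ‖y‖) + (2*‖x - y‖ + ‖v‖), ?_⟩⟩
  · -- (i) limit
    exact he.congr fun n => by simp only [hedef]
  · -- (ii)
    have h2 : (fun n : ℕ => PU (T^[n] x) - PU (T^[n+1] x)) = fun n => Pc (e n) := by
      funext n
      rw [hPc, hPc, ← map_sub]
    rw [h2]
    have := (Pc.continuous.tendsto v).comp he
    rw [hPv] at this; exact this
  · -- (iii) identity
    intro n
    rw [hsucc n, hT (T^[n] x)]
    simp only [hQ, hPc]
    rw [map_add, map_sub, hPidem]
    abel
  · -- (iii) limit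
    have h2 : (fun n : ℕ => Q (T^[n] x) - Q (T^[n+1] x)) = fun n => e n - Pc (e n) := by
      funext n
      simp only [hQ, hPc, hedef]
      rw [map_sub]
      abel
    rw [h2]
    have := he.sub ((Pc.continuous.tendsto v).comp he)
    simpa [hPv] using this
  · -- (iv)
    rintro c ⟨φ, hφmono, hweak⟩
    constructor
    · have hcu : ∀ u ∈ Uᗮ, ⟪u, c⟫ = 0 := by
        intro u hu
        have h0 : ∀ k : ℕ, ⟪PU (T^[φ k] x), u⟫ = (0:ℝ) := by
          intro k
          rw [hPc]
          exact (Submodule.mem_orthogonal U u).1 hu _ (hPmem _)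
        have hlim := hweak u
        have hlim0 : Tendsto (fun _ : ℕ => (0:ℝ)) atTop (𝓝 ⟪c, u⟫) :=
          Tendsto.congr h0 hlim
        have := tendsto_nhds_unique hlim0 tendsto_const_nhds
        rw [real_inner_comm]
        exact this
      have hmem2 : c ∈ Uᗮᗮ := (Submodule.mem_orthogonal Uᗮ c).2 hcu
      rwa [Submodule.orthogonal_orthogonal] at hmem2
    · obtain ⟨x0, hx0⟩ := hgproper.2
      have hDconv0 : Convex ℝ {w : X | g w ≠ ⊤} := by
        intro za hza zb hzb ta tb hta htb hsum
        obtain ⟨ra, hra⟩ : ∃ r : ℝ, g za = (r : EReal) := by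
          lift g za to ℝ using ⟨hza, hgproper.1 _⟩ with r hr
          exact ⟨r, rfl⟩
        obtain ⟨rb, hrb⟩ : ∃ r : ℝ, g zb = (r : EReal) := by
          lift g zb to ℝ using ⟨hzb, hgproper.1 _⟩ with r hr
          exact ⟨r, rfl⟩
        have hle := hgconv za zb ta tb hta htb hsum
        rw [hra, hrb, ← EReal.coe_mul, ← EReal.coe_mul, ← EReal.coe_add] at hle
        exact ne_top_of_le_ne_top (EReal.coe_ne_top _) hle
      have hDconv : Convex ℝ (closure {w : X | g w ≠ ⊤}) := hDconv0.closure
      have hDne : (closure {w : X | g w ≠ ⊤}).Nonempty := ⟨x0, subset_closure hx0⟩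
      have hDcomp : IsComplete (closure {w : X | g w ≠ ⊤}) := isClosed_closure.isComplete
      obtain ⟨pD, hpD, hpDeq⟩ := exists_norm_eq_iInf_of_complete_convex hDne hDcomp hDconv (c - v)
      have hchar := (norm_eq_iInf_iff_real_inner_le_zero hDconv hpD).1 hpDeq
      set w := c - v - pD with hwdef
      have hterm : ∀ k : ℕ, ⟪prox (RU (T^[φ k] x)) - pD, w⟫ ≤ 0 := by
        intro k
        have hmem : prox (RU (T^[φ k] x)) ∈ closure {w : X | g w ≠ ⊤} :=
          subset_closure (prox_ne_top' hgproper hprox _)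
        have := hchar _ hmem
        rw [real_inner_comm]
        exact this
      have hprid : ∀ k : ℕ, prox (RU (T^[φ k] x)) = PU (T^[φ k] x) - e (φ k) := by
        intro k
        have h7 := hid (φ k)
        have h8 : e (φ k) = T^[φ k] x - T^[φ k + 1] x := by simp only [hedef]
        rw [h8, ← h7]
        abel
      have h1 : Tendsto (fun k => ⟪PU (T^[φ k] x), w⟫) atTop (𝓝 ⟪c, w⟫) := hweak w
      have h2 : Tendsto (fun k => ⟪e (φ k), w⟫) atTop (𝓝 ⟪v, w⟫) := by
        have hsub : Tendsto (fun k => e (φ k)) atTop (𝓝 v) := he.comp hφmono.tendsto_atTop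
        exact hsub.inner tendsto_const_nhds
      have h4 : Tendsto (fun k => ⟪prox (RU (T^[φ k] x)) - pD, w⟫) atTop
          (𝓝 (⟪c, w⟫ - ⟪v, w⟫ - ⟪pD, w⟫)) := by
        refine Tendsto.congr (fun k => ?_) ((h1.sub h2).sub tendsto_const_nhds)
        simp only [hprid k, inner_sub_left, hedef]
      have h5 : ⟪c, w⟫ - ⟪v, w⟫ - ⟪pD, w⟫ = ‖w‖^2 := by
        rw [← inner_sub_left, ← inner_sub_left, ← hwdef, real_inner_self_eq_norm_sq]
      rw [h5] at h4
      have hw0 : ‖w‖^2 ≤ 0 := le_of_tendsto h4 (Filter.Eventually.of_forall hterm)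
      have hwn : ‖w‖ = 0 :=
        le_antisymm (by nlinarith [norm_nonneg w, hw0]) (norm_nonneg w)
      have hweq : c - v = pD := by
        have := norm_eq_zero.1 hwn
        rw [hwdef] at this
        have h9 : c - v - pD = 0 := this
        exact sub_eq_zero.1 h9
      rw [hweq]
      exact hpD
  · -- (v) second
    intro n
    rw [hPc]
    have h4 : Pc (T^[n] x) = Pc ((n:ℝ) • v + T^[n] x) := by
      rw [map_add, map_smul, hPv]
      simp
    rw [h4]
    exact le_trans (hPnorm _) (hb1 n)
  · -- (v) third
    intro n
    have h7 := hid n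
    have h8 : prox (RU (T^[n] x)) = PU (T^[n] x) - e n := by
      have h9 : e n = T^[n] x - T^[n+1] x := by simp only [hedef]
      rw [h9, ← h7]
      abel
    rw [h8]
    refine le_trans (norm_sub_le _ _) ?_
    have hb2 : ‖PU (T^[n] x)‖ ≤ ‖x - y‖ + ‖y‖ := by
      rw [hPc]
      have h4 : Pc (T^[n] x) = Pc ((n:ℝ) • v + T^[n] x) := by
        rw [map_add, map_smul, hPv]
        simp
      rw [h4]
      exact le_trans (hPnorm _) (hb1 n)
    linarith [hen n]
end
end

section
/- Let X be a real Hilbert space, U a closed linear subspace, g : X → (−∞,+∞] proper lower semicontinuous convex, T = Id − P_U + Prox_g ∘ R_U, and v = P_{closure(ran(Id−T))}(0); assume v ∈ U^⊥. Let x ∈ X, let y ∈ (U − v) ∩ dom g, and let n ∈ ℕ. Then g(y) ≥ g(Prox_g(R_U T^n x)) + ⟪y − Prox_g(R_U T^n x), (P_U T^n x − v) − Prox_g(R_U T^n x)⟫ − ⟪P_{U^⊥} T^n x − P_{U^⊥} T^{n+1} x − v, P_{U^⊥}(nv + T^n x)⟫ − (n+1)⟪(Id − T)(T^n x) − v, −v⟫,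 and moreover the term −(n+1)⟪(Id − T)(T^n x) − v, −v⟫ is nonnegative, so the inequality also holds with this term deleted. -/
open scoped RealInnerProductSpace Pointwise
open Filter Topology

noncomputable section

variable {X : Type*}

private lemma prox_subgrad' [NormedAddCommGroup X] [InnerProductSpace ℝ X]
    (g : X → EReal) (hgproper : EProper g) (hgconv : EConvexOn g)
    (prox : X → X) (hprox : IsProx g prox)
    (w y : X) (hy : g y ≠ ⊤) :
    g (prox w) + ((⟪y - prox w, w - prox w⟫ : ℝ) : EReal) ≤ g y := by
  set p := prox w with hpdef
  have hyB : g y ≠ ⊥ := hgproper.1 y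
  set gy : ℝ := (g y).toReal with hgydef
  have hgy : (gy : EReal) = g y := EReal.coe_toReal hy hyB
  have hpB : g p ≠ ⊥ := hgproper.1 p
  have hpT : g p ≠ ⊤ := by
    intro h
    have h1 := hprox w y
    rw [hpdef] at h
    rw [h, EReal.top_add_of_ne_bot (by simp)] at h1
    exact absurd (top_le_iff.mp h1)
      (ne_of_lt (EReal.add_lt_top hy (by simp)))
  set gp : ℝ := (g p).toReal with hgpdef
  have hgp : (gp : EReal) = g p := EReal.coe_toReal hpT hpB
  set K : ℝ := ‖y - p‖ ^ 2 / 2 with hKdef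
  have hK : 0 ≤ K := by positivity
  have key : ∀ t : ℝ, 0 < t → t ≤ 1 → gp + ⟪y - p, w - p⟫ ≤ gy + t * K := by
    intro t ht ht1
    have hconv := hgconv p y (1 - t) t (by linarith) ht.le (by ring)
    have hpr := hprox w ((1 - t) • p + t • y)
    have hchain : g p + ((‖p - w‖ ^ 2 / 2 : ℝ) : EReal) ≤
        ((1 - t : ℝ) : EReal) * g p + (t : EReal) * g y +
          ((‖(1 - t) • p + t • y - w‖ ^ 2 / 2 : ℝ) : EReal) :=
      le_trans hpr (add_le_add hconv le_rfl)
    rw [← hgp, ← hgy, ← EReal.coe_mul, ← EReal.coe_mul, ← EReal.coe_add, ← EReal.coe_add,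
      ← EReal.coe_add] at hchain
    have hre : gp + ‖p - w‖ ^ 2 / 2 ≤
        (1 - t) * gp + t * gy + ‖(1 - t) • p + t • y - w‖ ^ 2 / 2 :=
      EReal.coe_le_coe_iff.mp hchain
    have hnorm : ‖(1 - t) • p + t • y - w‖ ^ 2 =
        ‖p - w‖ ^ 2 + 2 * (t * ⟪p - w, y - p⟫) + t ^ 2 * ‖y - p‖ ^ 2 := by
      have hid : (1 - t) • p + t • y - w = (p - w) + t • (y - p) := by module
      rw [hid, norm_add_sq_real, real_inner_smul_right, norm_smul]
      rw [Real.norm_eq_abs, abs_of_pos ht]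
      ring
    rw [hnorm] at hre
    have hip : ⟪p - w, y - p⟫ = -⟪y - p, w - p⟫ := by
      rw [real_inner_comm]
      rw [show p - w = -(w - p) by abel, inner_neg_right]
    rw [hip] at hre
    nlinarith [sq_nonneg t, mul_pos ht ht]
  have hfinal : gp + ⟪y - p, w - p⟫ ≤ gy := by
    apply le_of_forall_pos_le_add
    intro ε hε
    have htpos : 0 < min 1 (ε / (K + 1)) := lt_min one_pos (by positivity)
    have h := key _ htpos (min_le_left _ _)
    have h2 : min 1 (ε / (K + 1)) * K ≤ ε := by
      have h3 : min 1 (ε / (K + 1)) ≤ ε / (K + 1) := min_le_right _ _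
      have h4 : min 1 (ε / (K + 1)) * K ≤ (ε / (K + 1)) * K :=
        mul_le_mul_of_nonneg_right h3 hK
      have h5 : (ε / (K + 1)) * K ≤ ε := by
        rw [div_mul_eq_mul_div, div_le_iff₀ (by linarith)]
        nlinarith
      linarith
    linarith
  calc g p + ((⟪y - p, w - p⟫ : ℝ) : EReal)
      = ((gp + ⟪y - p, w - p⟫ : ℝ) : EReal) := by rw [EReal.coe_add, hgp]
    _ ≤ (gy : EReal) := EReal.coe_le_coe_iff.mpr hfinal
    _ = g y := hgy

/-- The key function-value inequality along the Douglas–Rachford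
iteration: for `y ∈ (U − v) ∩ dom g` and every `n`,
`g(y) ≥ g(Prox_g(R_U Tⁿx)) + ⟪y − p, (P_U Tⁿx − v) − p⟫
  − ⟪P_{U^⊥}Tⁿx − P_{U^⊥}Tⁿ⁺¹x − v, P_{U^⊥}(nv + Tⁿx)⟫
  − (n+1)⟪(Id−T)Tⁿx − v, 0 − v⟫`,
where `p = Prox_g(R_U Tⁿx)`; moreover the last subtracted term is nonpositive
(so its negative is nonnegative), hence the inequality also holds with it deleted.
Here `Q = Id − P_U` is the projector onto `U^⊥`. -/
theorem DR_function_value_inequality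
    [NormedAddCommGroup X] [InnerProductSpace ℝ X] [CompleteSpace X]
    (U : Submodule ℝ X) (hUclosed : IsClosed (U : Set X)) [U.HasOrthogonalProjection]
    (g : X → EReal) (hgproper : EProper g) (hglsc : LowerSemicontinuous g)
    (hgconv : EConvexOn g)
    (prox : X → X) (hprox : IsProx g prox)
    (PU RU Q T : X → X)
    (hPU : ∀ z, PU z = (U.orthogonalProjectionOnto z : X))
    (hRU : ∀ z, RU z = 2 • PU z - z)
    (hQ : ∀ z, Q z = z - PU z)
    (hT : ∀ z, T z = z - PU z + prox (RU z))
    (v : X)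
    (hv : IsMetricProj (closure (Set.range fun z => z - T z)) 0 v)
    (hvU : v ∈ Uᗮ)
    (x y : X) (hyU : ∃ u ∈ U, y = u - v) (hydom : g y ≠ ⊤)
    (n : ℕ) :
    g (prox (RU (T^[n] x))) +
      (((⟪y - prox (RU (T^[n] x)), (PU (T^[n] x) - v) - prox (RU (T^[n] x))⟫
        - ⟪Q (T^[n] x) - Q (T^[n+1] x) - v, Q ((n : ℝ) • v + T^[n] x)⟫
        - ((n : ℝ) + 1) * ⟪(T^[n] x - T^[n+1] x) - v, (0 : X) - v⟫ : ℝ)) : EReal)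
      ≤ g y ∧
    (0 : ℝ) ≤ -(((n : ℝ) + 1) * ⟪(T^[n] x - T^[n+1] x) - v, (0 : X) - v⟫) ∧
    g (prox (RU (T^[n] x))) +
      (((⟪y - prox (RU (T^[n] x)), (PU (T^[n] x) - v) - prox (RU (T^[n] x))⟫
        - ⟪Q (T^[n] x) - Q (T^[n+1] x) - v, Q ((n : ℝ) • v + T^[n] x)⟫ : ℝ)) : EReal)
      ≤ g y := by
  obtain ⟨u, huU, hyu⟩ := hyU
  set a := T^[n] x with ha
  have hb : T^[n+1] x = T a := Function.iterate_succ_apply' T n x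
  set b := T a with hbdef
  set p := prox (RU a) with hpdef
  -- basic projection facts
  have hPUmem : ∀ z, PU z ∈ U := fun z => by rw [hPU]; exact SetLike.coe_mem _
  have hU0 : ∀ z w : X, z ∈ U → w ∈ Uᗮ → ⟪z, w⟫ = 0 := fun z w hz hw =>
    (Submodule.mem_orthogonal U w).mp hw z hz
  have hQmem : ∀ z, Q z ∈ Uᗮ := fun z => by
    rw [hQ, hPU]; exact U.sub_starProjection_mem_orthogonal z
  have hPUv : PU v = 0 := by
    rw [hPU, Submodule.orthogonalProjectionOnto_apply_of_mem_orthogonal hvU]; simp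
  have hpeq : p = b - a + PU a := by rw [hpdef, hbdef, hT]; abel
  set s := Q a - Q b - v with hsdef
  have hsmem : s ∈ Uᗮ := sub_mem (sub_mem (hQmem a) (hQmem b)) hvU
  -- (ii) : Q ((n:ℝ)•v + a) = (n:ℝ)•v + Q a
  have hQna : Q ((n : ℝ) • v + a) = (n : ℝ) • v + Q a := by
    have hproj : PU ((n : ℝ) • v + a) = (n : ℝ) • PU v + PU a := by
      simp [hPU, map_add, map_smul]
    rw [hQ, hQ, hproj, hPUv]
    module
  -- (i) : ⟪y - p, w⟫ = ⟪s, w⟫ for w ∈ Uᗮ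
  have hyps : y - p - s = u - PU b := by
    rw [hyu, hpeq, hsdef, hQ, hQ]; abel
  have hstep : ∀ w : X, w ∈ Uᗮ → ⟪y - p, w⟫ = ⟪s, w⟫ := by
    intro w hw
    have h1 : ⟪y - p - s, w⟫ = 0 := by
      rw [hyps]; exact hU0 _ _ (sub_mem huU (hPUmem b)) hw
    have h2 : ⟪y - p - s, w⟫ = ⟪y - p, w⟫ - ⟪s, w⟫ := inner_sub_left _ _ _
    linarith [h2 ▸ h1]
  -- (iii) : ⟪(a-b) - v, w⟫ = ⟪s, w⟫ for w ∈ Uᗮ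
  have hstep3 : ∀ w : X, w ∈ Uᗮ → ⟪(a - b) - v, w⟫ = ⟪s, w⟫ := by
    intro w hw
    have hd : (a - b) - v - s = PU a - PU b := by rw [hsdef, hQ, hQ]; abel
    have h1 : ⟪(a - b) - v - s, w⟫ = 0 := by
      rw [hd]; exact hU0 _ _ (sub_mem (hPUmem a) (hPUmem b)) hw
    have h2 : ⟪(a - b) - v - s, w⟫ = ⟪(a - b) - v, w⟫ - ⟪s, w⟫ := inner_sub_left _ _ _
    linarith [h2 ▸ h1]
  -- the main algebraic identity
  have hmain : ⟪y - p, (PU a - v) - p⟫ - ⟪Q a - Q b - v, Q ((n : ℝ) • v + a)⟫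
      - ((n : ℝ) + 1) * ⟪(a - b) - v, (0 : X) - v⟫ = ⟪y - p, RU a - p⟫ := by
    have e1 : ⟪y - p, (PU a - v) - p⟫ = ⟪y - p, RU a - p⟫ + ⟪y - p, Q a - v⟫ := by
      rw [← inner_add_right]
      congr 1
      rw [hRU, hQ]
      abel
    have e2 : ⟪y - p, Q a - v⟫ = ⟪s, Q a - v⟫ :=
      hstep _ (sub_mem (hQmem a) hvU)
    have e3 : ⟪(a - b) - v, (0 : X) - v⟫ = ⟪s, (0 : X) - v⟫ :=
      hstep3 _ (by rw [zero_sub]; exact neg_mem hvU)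
    have e4 : ((n : ℝ) + 1) * ⟪s, (0 : X) - v⟫ = ⟪s, ((n : ℝ) + 1) • ((0 : X) - v)⟫ :=
      (real_inner_smul_right _ _ _).symm
    rw [e1, e2, e3, hQna, ← hsdef, e4]
    have e5 : ⟪s, Q a - v⟫ - ⟪s, (n : ℝ) • v + Q a⟫ - ⟪s, ((n : ℝ) + 1) • ((0 : X) - v)⟫
        = (0 : ℝ) := by
      rw [← inner_sub_right, ← inner_sub_right]
      have hz : Q a - v - ((n : ℝ) • v + Q a) - ((n : ℝ) + 1) • ((0 : X) - v) = 0 := by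
        module
      rw [hz, inner_zero_right]
    linarith
  -- nonnegativity of the last term
  have hmem : a - T a ∈ closure (Set.range fun z => z - T z) :=
    subset_closure ⟨a, rfl⟩
  have hproj0 := hv.2 _ hmem
  have hq : ⟪(a - b) - v, (0 : X) - v⟫ ≤ 0 := by rw [hbdef]; exact hproj0
  have hnonneg : (0 : ℝ) ≤ -(((n : ℝ) + 1) * ⟪(a - b) - v, (0 : X) - v⟫) := by
    have hn1 : (0 : ℝ) ≤ (n : ℝ) + 1 := by positivity
    nlinarith
  -- assemble
  have hsub := prox_subgrad' g hgproper hgconv prox hprox (RU a) y hydom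
  rw [← hpdef] at hsub
  have hb' : T^[n+1] x = b := hb
  refine ⟨?_, ?_, ?_⟩
  · rw [hb', hmain]
    exact hsub
  · rw [hb']
    exact hnonneg
  · rw [hb']
    refine le_trans ?_ (hmain ▸ hsub)
    apply add_le_add le_rfl
    apply EReal.coe_le_coe_iff.mpr
    linarith
end
end

section
/- Let X be a real Hilbert space, U a closed linear subspace, g : X → (−∞,+∞] proper lower semicontinuous convex, T = Id − P_U + Prox_g ∘ R_U, and v = P_{closure(ran(Id−T))}(0); assume v ∈ U^⊥ and that F = {x : x = T(x + v)} is nonempty. Let x ∈ X and let y ∈ (U − v) ∩ dom g. Then there exists a real sequence (ε_n) with ε_n → 0 such that for every n, g(y) ≥ g(Prox_g(R_U T^n x)) + ε_n + (n+1)⟪T^n x − T^{n+1} x − v, v⟫ ≥ g(Prox_g(R_U T^n x)) + ε_n. Moreover: the sequence (Prox_g(R_U T^n x)) is bounded and all its weak cluster points are minimizers of g over U − v; g(Prox_g(R_U T^n x)) → inf g(U − v); (n+1)⟪T^n x − T^{n+1} x − v, v⟫ → 0; and the sequence (P_U T^n x) is bounded with all its weak cluster points being minimizers of g(· − v) over U.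 -/
open scoped RealInnerProductSpace Pointwise
open Filter Topology

noncomputable section

variable {X : Type*}

section AuxDR
variable [NormedAddCommGroup X] [InnerProductSpace ℝ X]

lemma DR_prox_val_ne_top {g : X → EReal} (hgproper : EProper g) {prox : X → X}
    (hprox : IsProx g prox) (w : X) : g (prox w) ≠ ⊤ := by
  obtain ⟨x₀, hx₀⟩ := hgproper.2
  intro h
  have h2 := hprox w x₀
  rw [h, EReal.top_add_coe] at h2
  exact absurd (top_le_iff.1 h2) (EReal.add_lt_top hx₀ (EReal.coe_ne_top _)).ne

lemma DR_prox_subgrad {g : X → EReal} (hgproper : EProper g) (hgconv : EConvexOn g)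
    {prox : X → X} (hprox : IsProx g prox) (w z : X) :
    g (prox w) + ((⟪z - prox w, w - prox w⟫ : ℝ) : EReal) ≤ g z := by
  by_cases hz : g z = ⊤
  · rw [hz]; exact le_top
  set p := prox w with hp
  have hpt : g p ≠ ⊤ := DR_prox_val_ne_top hgproper hprox w
  have hpb : g p ≠ ⊥ := hgproper.1 _
  have hzb : g z ≠ ⊥ := hgproper.1 _
  set gp := (g p).toReal with hgpdef
  set gz := (g z).toReal with hgzdef
  have hgp : g p = (gp : EReal) := (EReal.coe_toReal hpt hpb).symm
  have hgz : g z = (gz : EReal) := (EReal.coe_toReal hz hzb).symm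
  have key : ∀ t : ℝ, 0 < t → t ≤ 1 →
      0 ≤ (gz - gp) + ⟪z - p, p - w⟫ + t * (‖z - p‖ ^ 2 / 2) := by
    intro t ht ht1
    have hconv := hgconv p z (1 - t) t (by linarith) ht.le (by ring)
    have hip := hprox w ((1 - t) • p + t • z)
    rw [← hp] at hip
    have hc2 : g ((1 - t) • p + t • z) ≤ (((1 - t) * gp + t * gz : ℝ) : EReal) := by
      refine hconv.trans_eq ?_
      rw [hgp, hgz, ← EReal.coe_mul, ← EReal.coe_mul, ← EReal.coe_add]
    have hchain : ((gp + ‖p - w‖ ^ 2 / 2 : ℝ) : EReal) ≤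
        (((1 - t) * gp + t * gz + ‖(1 - t) • p + t • z - w‖ ^ 2 / 2 : ℝ) : EReal) := by
      rw [EReal.coe_add, EReal.coe_add, ← hgp]
      exact hip.trans (add_le_add_left hc2 _)
    have hreal : gp + ‖p - w‖ ^ 2 / 2 ≤
        (1 - t) * gp + t * gz + ‖(1 - t) • p + t • z - w‖ ^ 2 / 2 :=
      EReal.coe_le_coe_iff.1 hchain
    have hexp : ‖(1 - t) • p + t • z - w‖ ^ 2 =
        ‖p - w‖ ^ 2 + 2 * (t * ⟪p - w, z - p⟫) + t ^ 2 * ‖z - p‖ ^ 2 := by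
      have hvv : (1 - t) • p + t • z - w = (p - w) + t • (z - p) := by
        rw [sub_smul, one_smul, smul_sub]; abel
      rw [hvv, norm_add_sq_real, real_inner_smul_right, norm_smul]
      simp [mul_pow, abs_of_pos ht]
    have hcomm : ⟪p - w, z - p⟫ = ⟪z - p, p - w⟫ := real_inner_comm _ _
    by_contra hcon
    push_neg at hcon
    nlinarith [mul_pos ht (neg_pos.2 hcon)]
  have h0 : 0 ≤ (gz - gp) + ⟪z - p, p - w⟫ := by
    have hlim : Tendsto
        (fun k : ℕ => (gz - gp) + ⟪z - p, p - w⟫ + (1 / (k + 1) : ℝ) * (‖z - p‖ ^ 2 / 2))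
        atTop (𝓝 ((gz - gp) + ⟪z - p, p - w⟫)) := by
      have h1 : Tendsto (fun k : ℕ => (1 / (k + 1) : ℝ)) atTop (𝓝 0) :=
        tendsto_one_div_add_atTop_nhds_zero_nat
      have h2 := (h1.mul_const (‖z - p‖ ^ 2 / 2)).const_add ((gz - gp) + ⟪z - p, p - w⟫)
      simpa using h2
    refine ge_of_tendsto hlim (Eventually.of_forall fun k => key _ (by positivity) ?_)
    rw [div_le_one (by positivity)]
    simp [le_add_iff_nonneg_left]
  have hiden : ⟪z - p, w - p⟫ = -⟪z - p, p - w⟫ := by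
    rw [← inner_neg_right]; congr 1; abel
  rw [hgp, hgz, ← EReal.coe_add, EReal.coe_le_coe_iff, hiden]
  linarith

lemma DR_prox_firm {g : X → EReal} (hgproper : EProper g) (hgconv : EConvexOn g)
    {prox : X → X} (hprox : IsProx g prox) (a b : X) :
    ‖prox a - prox b‖ ^ 2 ≤ ⟪prox a - prox b, a - b⟫ := by
  have h1 := DR_prox_subgrad hgproper hgconv hprox a (prox b)
  have h2 := DR_prox_subgrad hgproper hgconv hprox b (prox a)
  set pa := prox a
  set pb := prox b
  have hat : g pa ≠ ⊤ := DR_prox_val_ne_top hgproper hprox a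
  have hbt : g pb ≠ ⊤ := DR_prox_val_ne_top hgproper hprox b
  have hab : g pa ≠ ⊥ := hgproper.1 _
  have hbb : g pb ≠ ⊥ := hgproper.1 _
  rw [(EReal.coe_toReal hat hab).symm, (EReal.coe_toReal hbt hbb).symm,
    ← EReal.coe_add, EReal.coe_le_coe_iff] at h1 h2
  have hiden : ⟪pb - pa, a - pa⟫ + ⟪pa - pb, b - pb⟫ =
      -⟪pa - pb, a - b⟫ + ‖pa - pb‖ ^ 2 := by
    have e1 : a - pa = (a - b) + (b - pb) + (pb - pa) := by abel
    rw [e1, inner_add_right, inner_add_right, real_inner_self_eq_norm_sq]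
    have e2 : ⟪pb - pa, a - b⟫ = -⟪pa - pb, a - b⟫ := by
      rw [← inner_neg_left]; congr 1; abel
    have e3 : ⟪pb - pa, b - pb⟫ = -⟪pa - pb, b - pb⟫ := by
      rw [← inner_neg_left]; congr 1; abel
    have e4 : ‖pb - pa‖ = ‖pa - pb‖ := norm_sub_rev _ _
    rw [e2, e3, e4]; ring
  linarith [hiden]

lemma DR_weak_lsc [CompleteSpace X] {g : X → EReal} (hgproper : EProper g)
    (hglsc : LowerSemicontinuous g) (hgconv : EConvexOn g)
    (p : ℕ → X) (c : X)
    (hw : ∀ w : X, Tendsto (fun n => (⟪p n, w⟫ : ℝ)) atTop (𝓝 ⟪c, w⟫))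
    (hfin : ∀ n, g (p n) ≠ ⊤) (L : ℝ)
    (hL : Tendsto (fun n => (g (p n)).toReal) atTop (𝓝 L)) :
    g c ≤ (L : EReal) := by
  by_contra hcon
  push_neg at hcon
  obtain ⟨M, hM1, hM2⟩ := exists_between hcon
  have hMt : M ≠ ⊤ := (hM2.trans_le le_top).ne
  have hMb : M ≠ ⊥ := (bot_le.trans_lt hM1).ne'
  set L' := M.toReal with hL'def
  have hML : M = (L' : EReal) := (EReal.coe_toReal hMt hMb).symm
  have hLL' : L < L' := by
    rw [hML] at hM1; exact_mod_cast hM1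
  set E : Set (X × ℝ) := {q | g q.1 ≤ (q.2 : EReal)} with hEdef
  have hEconv : Convex ℝ E := by
    rintro ⟨z1, t1⟩ h1 ⟨z2, t2⟩ h2 α β hα hβ hαβ
    simp only [hEdef, Set.mem_setOf_eq] at h1 h2 ⊢
    have hcv := hgconv z1 z2 α β hα hβ hαβ
    have hm1 : (α : EReal) * g z1 ≤ (α : EReal) * (t1 : EReal) :=
      mul_le_mul_of_nonneg_left h1 (by exact_mod_cast hα)
    have hm2 : (β : EReal) * g z2 ≤ (β : EReal) * (t2 : EReal) :=
      mul_le_mul_of_nonneg_left h2 (by exact_mod_cast hβ)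
    refine hcv.trans ((add_le_add hm1 hm2).trans_eq ?_)
    rw [← EReal.coe_mul, ← EReal.coe_mul, ← EReal.coe_add]
    rfl
  have hEclosed : IsClosed E := by
    rw [← isOpen_compl_iff, isOpen_iff_mem_nhds]
    rintro ⟨z, t⟩ hzt
    simp only [Set.mem_compl_iff, hEdef, Set.mem_setOf_eq, not_le] at hzt
    obtain ⟨N, hN1, hN2⟩ := exists_between hzt
    have hNt : N ≠ ⊤ := (hN2.trans_le le_top).ne
    have hNb : N ≠ ⊥ := (bot_le.trans_lt hN1).ne'
    have hNc : N = ((N.toReal : ℝ) : EReal) := (EReal.coe_toReal hNt hNb).symm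
    have htN : t < N.toReal := by rw [hNc] at hN1; exact_mod_cast hN1
    have h1 : ∀ᶠ yy in 𝓝 z, N < g yy := hglsc z N hN2
    rw [nhds_prod_eq]
    refine mem_of_superset (Filter.prod_mem_prod h1 (Iio_mem_nhds htN)) ?_
    rintro ⟨zz, ss⟩ ⟨hzz, hss⟩
    simp only [Set.mem_compl_iff, hEdef, Set.mem_setOf_eq, not_le]
    refine lt_trans ?_ hzz
    rw [hNc]
    exact_mod_cast hss
  have hpt : ((c, L') : X × ℝ) ∉ E := by
    simp only [hEdef, Set.mem_setOf_eq]
    rw [← hML]; exact not_le.2 hM2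
  obtain ⟨f, u, hfu1, hfu2⟩ := geometric_hahn_banach_point_closed hEconv hEclosed hpt
  set τ := f ((0 : X), (1 : ℝ)) with hτdef
  set φ : X →L[ℝ] ℝ := f.comp (ContinuousLinearMap.inl ℝ X ℝ) with hφdef
  have hsplit : ∀ z : X, ∀ t : ℝ, f (z, t) = φ z + t * τ := by
    intro z t
    have hzt : ((z, t) : X × ℝ) = (z, 0) + t • ((0 : X), (1 : ℝ)) := by
      simp [Prod.ext_iff]
    rw [hzt, map_add, map_smul]
    simp [hφdef, hτdef, ContinuousLinearMap.comp_apply, smul_eq_mul]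
  set a := (InnerProductSpace.toDual ℝ X).symm φ with hadef
  have ha : ∀ z : X, ⟪z, a⟫ = φ z := fun z => by
    rw [real_inner_comm, hadef, InnerProductSpace.toDual_symm_apply]
  have hmem : ∀ n, ((p n, (g (p n)).toReal) : X × ℝ) ∈ E := fun n => by
    simp only [hEdef, Set.mem_setOf_eq]
    rw [EReal.coe_toReal (hfin n) (hgproper.1 _)]
  have hτ0 : 0 ≤ τ := by
    by_contra hτn
    push_neg at hτn
    set t := max ((g (p 0)).toReal) ((u - φ (p 0)) / τ) with htdef
    have h1 : ((p 0, t) : X × ℝ) ∈ E := by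
      simp only [hEdef, Set.mem_setOf_eq]
      calc g (p 0) ≤ (((g (p 0)).toReal : ℝ) : EReal) := by
            rw [EReal.coe_toReal (hfin 0) (hgproper.1 _)]
        _ ≤ ((t : ℝ) : EReal) := by exact_mod_cast le_max_left _ _
    have h2 := hfu2 _ h1
    rw [hsplit] at h2
    have ht2 : (u - φ (p 0)) / τ ≤ t := le_max_right _ _
    have h3 : t * τ ≤ ((u - φ (p 0)) / τ) * τ := mul_le_mul_of_nonpos_right ht2 hτn.le
    rw [div_mul_cancel₀ _ hτn.ne] at h3
    linarith
  have hφlim : Tendsto (fun n => φ (p n)) atTop (𝓝 (φ c)) := by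
    have := hw a
    simp only [ha] at this
    exact this
  have hlim : Tendsto (fun n => φ (p n) + (g (p n)).toReal * τ) atTop (𝓝 (φ c + L * τ)) :=
    hφlim.add (hL.mul_const τ)
  have hle : u ≤ φ c + L * τ :=
    ge_of_tendsto' hlim (fun n => by
      have := hfu2 _ (hmem n)
      rw [hsplit] at this
      exact this.le)
  have hpt2 : φ c + L' * τ < u := by
    have := hfu1
    rw [hsplit] at this
    exact this
  rcases eq_or_lt_of_le hτ0 with h0 | hpos
  · rw [← h0] at hle hpt2
    simp at hle hpt2
    linarith
  · nlinarith [mul_lt_mul_of_pos_right hLL' hpos]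

end AuxDR

set_option maxHeartbeats 1600000 in
/-- Function-value analysis of the Douglas–Rachford iteration:
for `y ∈ (U − v) ∩ dom g` there is a null real sequence `ε` with
`g(y) ≥ g(pₙ) + εₙ + (n+1)⟪Tⁿx − Tⁿ⁺¹x − v, v⟫ ≥ g(pₙ) + εₙ`, where
`pₙ = Prox_g(R_U Tⁿx)`; moreover `(pₙ)` is bounded with all weak cluster points
minimizing `g` over `U − v`, `g(pₙ) → inf g(U − v)`,
`(n+1)⟪Tⁿx − Tⁿ⁺¹x − v, v⟫ → 0`, and `(P_U Tⁿx)` is bounded with all weak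
cluster points minimizing `g(· − v)` over `U`. -/
theorem DR_function_value_limits
    [NormedAddCommGroup X] [InnerProductSpace ℝ X] [CompleteSpace X]
    (U : Submodule ℝ X) (hUclosed : IsClosed (U : Set X)) [U.HasOrthogonalProjection]
    (g : X → EReal) (hgproper : EProper g) (hglsc : LowerSemicontinuous g)
    (hgconv : EConvexOn g)
    (prox : X → X) (hprox : IsProx g prox)
    (PU RU T : X → X)
    (hPU : ∀ z, PU z = (U.orthogonalProjectionOnto z : X))
    (hRU : ∀ z, RU z = 2 • PU z - z)
    (hT : ∀ z, T z = z - PU z + prox (RU z))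
    (v : X)
    (hv : IsMetricProj (closure (Set.range fun z => z - T z)) 0 v)
    (hvU : v ∈ Uᗮ)
    (F : Set X) (hF : F = {z | z = T (z + v)}) (hFne : F.Nonempty)
    (x y : X) (hyU : ∃ u ∈ U, y = u - v) (hydom : g y ≠ ⊤) :
    (∃ ε : ℕ → ℝ, Tendsto ε atTop (𝓝 0) ∧
      ∀ n : ℕ,
        g (prox (RU (T^[n] x))) +
            ((ε n + ((n : ℝ) + 1) * ⟪T^[n] x - T^[n+1] x - v, v⟫ : ℝ) : EReal) ≤ g y ∧
        g (prox (RU (T^[n] x))) + ((ε n : ℝ) : EReal) ≤ g y) ∧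
    (∃ M : ℝ, ∀ n : ℕ, ‖prox (RU (T^[n] x))‖ ≤ M) ∧
    (∀ c : X, IsWeakClusterPt (fun n : ℕ => prox (RU (T^[n] x))) c →
      (∃ u ∈ U, c = u - v) ∧ ∀ u ∈ U, g c ≤ g (u - v)) ∧
    Tendsto (fun n : ℕ => g (prox (RU (T^[n] x)))) atTop
      (𝓝 (⨅ u : U, g ((u : X) - v))) ∧
    Tendsto (fun n : ℕ => ((n : ℝ) + 1) * ⟪T^[n] x - T^[n+1] x - v, v⟫) atTop (𝓝 0) ∧
    (∃ M : ℝ, ∀ n : ℕ, ‖PU (T^[n] x)‖ ≤ M) ∧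
    (∀ c : X, IsWeakClusterPt (fun n : ℕ => PU (T^[n] x)) c →
      c ∈ U ∧ ∀ u ∈ U, g (c - v) ≤ g (u - v)) := by
  obtain ⟨u₀, hu₀U, hyeq⟩ := hyU
  subst hyeq
  obtain ⟨f₀, hf₀F⟩ := hFne
  have hf₀ : f₀ = T (f₀ + v) := by rw [hF] at hf₀F; exact hf₀F
  haveI : CompleteSpace U := hUclosed.completeSpace_coe
  -- orthogonal projection basics
  have hPmem : ∀ z : X, PU z ∈ U := fun z => by rw [hPU]; exact SetLike.coe_mem _
  have hPperp : ∀ z : X, z - PU z ∈ Uᗮ := fun z => by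
    rw [hPU]; exact Submodule.sub_starProjection_mem_orthogonal z
  have hPadd : ∀ z z' : X, PU (z + z') = PU z + PU z' := fun z z' => by
    rw [hPU, hPU, hPU, map_add]; rfl
  have hPsub : ∀ z z' : X, PU (z - z') = PU z - PU z' := fun z z' => by
    rw [hPU, hPU, hPU, map_sub]; rfl
  have hPsmul : ∀ (r : ℝ) (z : X), PU (r • z) = r • PU z := fun r z => by
    rw [hPU, hPU, map_smul]; rfl
  have hPv : PU v = 0 := by
    rw [hPU, Submodule.orthogonalProjectionOnto_apply_of_mem_orthogonal hvU]; rfl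
  have hinner0 : ∀ z w : X, z ∈ U → w ∈ Uᗮ → ⟪z, w⟫ = 0 := fun z w hz hw =>
    Submodule.inner_right_of_mem_orthogonal hz hw
  have hnorm_le : ∀ w z : X, ⟪w, z - w⟫ = 0 → ‖w‖ ≤ ‖z‖ := by
    intro w z h
    have h2 : ‖z‖ ^ 2 = ‖w‖ ^ 2 + ‖z - w‖ ^ 2 := by
      calc ‖z‖ ^ 2 = ‖w + (z - w)‖ ^ 2 := by rw [add_sub_cancel]
        _ = ‖w‖ ^ 2 + ‖z - w‖ ^ 2 := by rw [norm_add_sq_real, h]; ring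
    nlinarith [norm_nonneg w, norm_nonneg z, sq_nonneg ‖z - w‖]
  have hPnorm : ∀ z : X, ‖PU z‖ ≤ ‖z‖ := fun z =>
    hnorm_le _ _ (hinner0 _ _ (hPmem z) (hPperp z))
  have hQnorm : ∀ z : X, ‖z - PU z‖ ≤ ‖z‖ := by
    intro z
    refine hnorm_le _ _ ?_
    have e : z - (z - PU z) = PU z := by abel
    rw [e, real_inner_comm]
    exact hinner0 _ _ (hPmem z) (hPperp z)
  -- firm nonexpansiveness of T
  have hfne : ∀ a b : X, ‖T a - T b‖ ^ 2 + ‖(a - T a) - (b - T b)‖ ^ 2 ≤ ‖a - b‖ ^ 2 := by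
    intro a b
    have hfp := DR_prox_firm hgproper hgconv hprox (RU a) (RU b)
    set m := prox (RU a) - prox (RU b) with hm
    have hRd : RU a - RU b = PU (a - b) + PU (a - b) - (a - b) := by
      rw [hRU, hRU, two_smul, two_smul, hPsub]; abel
    have hTd : T a - T b = (a - b) - PU (a - b) + m := by
      rw [hT, hT, hPsub, hm]; abel
    have hSd : (a - T a) - (b - T b) = PU (a - b) - m := by
      rw [hT, hT, hPsub, hm]; abel
    rw [hTd, hSd]
    have horth : ⟪PU (a - b), (a - b) - PU (a - b)⟫ = 0 :=
      hinner0 _ _ (hPmem _) (hPperp _)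
    have e1 : ‖(a - b) - PU (a - b) + m‖ ^ 2 =
        ‖(a - b) - PU (a - b)‖ ^ 2 + 2 * ⟪(a - b) - PU (a - b), m⟫ + ‖m‖ ^ 2 :=
      norm_add_sq_real _ _
    have e2 : ‖PU (a - b) - m‖ ^ 2 = ‖PU (a - b)‖ ^ 2 - 2 * ⟪PU (a - b), m⟫ + ‖m‖ ^ 2 :=
      norm_sub_sq_real _ _
    have e3 : ‖a - b‖ ^ 2 = ‖PU (a - b)‖ ^ 2 + ‖(a - b) - PU (a - b)‖ ^ 2 := by
      calc ‖a - b‖ ^ 2 = ‖PU (a - b) + ((a - b) - PU (a - b))‖ ^ 2 := by rw [add_sub_cancel]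
        _ = _ := by rw [norm_add_sq_real, horth]; ring
    have e4 : ⟪m, RU a - RU b⟫ = ⟪m, PU (a - b)⟫ + ⟪m, PU (a - b)⟫ - ⟪m, a - b⟫ := by
      rw [hRd, inner_sub_right, inner_add_right]
    have c1 : ⟪(a - b) - PU (a - b), m⟫ = ⟪m, a - b⟫ - ⟪m, PU (a - b)⟫ := by
      rw [real_inner_comm, inner_sub_right]
    have c2 : ⟪PU (a - b), m⟫ = ⟪m, PU (a - b)⟫ := real_inner_comm _ _
    linarith [hfp, e1, e2, e3, e4, c1, c2]
  -- iterate basics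
  have hx1 : ∀ n : ℕ, T^[n+1] x = T (T^[n] x) := fun n => Function.iterate_succ_apply' T n x
  have hprel : ∀ n : ℕ, prox (RU (T^[n] x)) = T^[n+1] x - T^[n] x + PU (T^[n] x) := by
    intro n; rw [hx1 n, hT (T^[n] x)]; abel
  have hpq : ∀ n : ℕ, prox (RU (T^[n] x)) = PU (T^[n] x) - (T^[n] x - T^[n+1] x) := by
    intro n; rw [hprel n]; abel
  have hsub : ∀ n : ℕ, RU (T^[n] x) - prox (RU (T^[n] x)) = PU (T^[n] x) - T^[n+1] x := by
    intro n; rw [hprel n, hRU, two_smul]; abel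
  have hmd : ∀ n : ℕ, 0 ≤ ⟪T^[n] x - T^[n+1] x - v, v⟫ := by
    intro n
    have hmem : T^[n] x - T^[n+1] x ∈ closure (Set.range fun z => z - T z) :=
      subset_closure ⟨T^[n] x, by rw [hx1 n]⟩
    have h := hv.2 _ hmem
    rw [zero_sub, inner_neg_right] at h
    linarith
  -- the shifted sequence
  set bb : ℕ → X := fun n => T^[n] x + (n : ℝ) • v - f₀ with hbb
  have hstep : ∀ n : ℕ, ‖bb (n+1)‖ ^ 2 + ‖T^[n] x - T^[n+1] x - v‖ ^ 2 +
      2 * ((n : ℝ) + 1) * ⟪T^[n] x - T^[n+1] x - v, v⟫ ≤ ‖bb n‖ ^ 2 := by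
    intro n
    have h := hfne (T^[n] x) (f₀ + v)
    rw [← hx1 n, ← hf₀] at h
    have hv2 : T^[n] x - T^[n+1] x - (f₀ + v - f₀) = T^[n] x - T^[n+1] x - v := by abel
    rw [hv2] at h
    have e1 : T^[n+1] x - f₀ = bb (n+1) - ((n : ℝ) + 1) • v := by
      simp only [hbb]; push_cast; module
    have e2 : T^[n] x - (f₀ + v) = bb n - ((n : ℝ) + 1) • v := by
      simp only [hbb]; module
    rw [e1, e2, norm_sub_sq_real (bb (n+1)) (((n : ℝ) + 1) • v),
      norm_sub_sq_real (bb n) (((n : ℝ) + 1) • v)] at h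
    have e3 : ⟪bb n, ((n : ℝ) + 1) • v⟫ - ⟪bb (n+1), ((n : ℝ) + 1) • v⟫ =
        ((n : ℝ) + 1) * ⟪T^[n] x - T^[n+1] x - v, v⟫ := by
      rw [← inner_sub_left]
      have e5 : bb n - bb (n+1) = T^[n] x - T^[n+1] x - v := by
        simp only [hbb]; push_cast; module
      rw [e5, real_inner_smul_right, real_inner_comm]
    linarith [h, e3]
  set A : ℕ → ℝ := fun n => ‖T^[n] x - T^[n+1] x - v‖ ^ 2 +
      2 * ((n : ℝ) + 1) * ⟪T^[n] x - T^[n+1] x - v, v⟫ with hA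
  have hA0 : ∀ n, 0 ≤ A n := by
    intro n
    have h1 := hmd n
    have h2 : (0:ℝ) ≤ 2 * ((n : ℝ) + 1) := by positivity
    simp only [hA]
    nlinarith [sq_nonneg ‖T^[n] x - T^[n+1] x - v‖]
  have hstepA : ∀ n, ‖bb (n+1)‖ ^ 2 + A n ≤ ‖bb n‖ ^ 2 := by
    intro n; have := hstep n; simp only [hA]; linarith
  have hBmono : ∀ n, ‖bb (n+1)‖ ^ 2 ≤ ‖bb n‖ ^ 2 := fun n => by
    have := hstepA n; have := hA0 n; linarith
  have hBb : ∀ n, ‖bb n‖ ^ 2 ≤ ‖bb 0‖ ^ 2 := by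
    intro n
    induction n with
    | zero => exact le_refl _
    | succ k ih => exact (hBmono k).trans ih
  have hbnorm : ∀ n, ‖bb n‖ ≤ ‖bb 0‖ := by
    intro n
    have := hBb n
    nlinarith [norm_nonneg (bb n), norm_nonneg (bb 0)]
  have hAsum : ∀ N : ℕ, ∑ i ∈ Finset.range N, A i ≤ ‖bb 0‖ ^ 2 := by
    have key : ∀ N : ℕ, ∑ i ∈ Finset.range N, A i + ‖bb N‖ ^ 2 ≤ ‖bb 0‖ ^ 2 := by
      intro N
      induction N with
      | zero => simp
      | succ k ih =>
        rw [Finset.sum_range_succ]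
        have := hstepA k
        linarith
    intro N
    have := key N
    nlinarith [norm_nonneg (bb N)]
  have hAlim : Tendsto A atTop (𝓝 0) :=
    (summable_of_sum_range_le hA0 hAsum).tendsto_atTop_zero
  have hδ2 : Tendsto (fun n => ‖T^[n] x - T^[n+1] x - v‖ ^ 2) atTop (𝓝 0) := by
    refine squeeze_zero (fun n => by positivity) (fun n => ?_) hAlim
    have h1 := hmd n
    have h2 : (0:ℝ) ≤ 2 * ((n : ℝ) + 1) := by positivity
    simp only [hA]
    nlinarith
  have hδ : Tendsto (fun n => ‖T^[n] x - T^[n+1] x - v‖) atTop (𝓝 0) := by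
    have hc := (Real.continuous_sqrt.tendsto' 0 0 Real.sqrt_zero).comp hδ2
    exact hc.congr fun n => Real.sqrt_sq (norm_nonneg _)
  have hC5 : Tendsto (fun n : ℕ => ((n : ℝ) + 1) * ⟪T^[n] x - T^[n+1] x - v, v⟫) atTop (𝓝 0) := by
    have h0 : ∀ n : ℕ, 0 ≤ ((n : ℝ) + 1) * ⟪T^[n] x - T^[n+1] x - v, v⟫ := fun n =>
      mul_nonneg (by positivity) (hmd n)
    have hb : ∀ n : ℕ, ((n : ℝ) + 1) * ⟪T^[n] x - T^[n+1] x - v, v⟫ ≤ A n := by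
      intro n
      have h1 := hmd n
      have h2 : (0:ℝ) ≤ (n : ℝ) + 1 := by positivity
      simp only [hA]
      nlinarith [sq_nonneg ‖T^[n] x - T^[n+1] x - v‖]
    exact squeeze_zero h0 hb hAlim
  have hδvb : ∀ n, ‖T^[n] x - T^[n+1] x - v‖ ≤ ‖bb 0‖ := by
    intro n
    have h1 := hstepA n
    have h2 := hBb n
    have h3 := hA0 n
    have h4 : ‖T^[n] x - T^[n+1] x - v‖ ^ 2 ≤ ‖bb 0‖ ^ 2 := by
      have h5 := hmd n
      have h6 : (0:ℝ) ≤ 2 * ((n : ℝ) + 1) := by positivity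
      simp only [hA] at h1 h3
      nlinarith [sq_nonneg ‖bb (n+1)‖]
    nlinarith [norm_nonneg (T^[n] x - T^[n+1] x - v), norm_nonneg (bb 0)]
  -- projections of iterates
  have hq_eq : ∀ n, PU (T^[n] x) = PU (bb n + f₀) := by
    intro n
    have e : bb n + f₀ = T^[n] x + (n : ℝ) • v := by simp only [hbb]; abel
    rw [e, hPadd, hPsmul, hPv, smul_zero, add_zero]
  have hqb : ∀ n, ‖PU (T^[n] x)‖ ≤ ‖bb 0‖ + ‖f₀‖ := by
    intro n
    rw [hq_eq n]
    exact (hPnorm _).trans ((norm_add_le _ _).trans (add_le_add_left (hbnorm n) _))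
  set rr : ℕ → X := fun n => bb n + f₀ - PU (bb n + f₀) with hrr
  have hrmem : ∀ n, rr n ∈ Uᗮ := fun n => hPperp _
  have hrb : ∀ n, ‖rr n‖ ≤ ‖bb 0‖ + ‖f₀‖ := fun n =>
    (hQnorm _).trans ((norm_add_le _ _).trans (add_le_add_left (hbnorm n) _))
  have hxq : ∀ n, PU (T^[n] x) = T^[n] x - (rr n - (n : ℝ) • v) := by
    intro n
    rw [hq_eq n]
    simp only [hrr, hbb]
    module
  -- the key inner product identity
  have hinnereq : ∀ uu : X, uu ∈ U → ∀ n : ℕ,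
      ⟪(uu - v) - prox (RU (T^[n] x)), RU (T^[n] x) - prox (RU (T^[n] x))⟫ =
      (⟪uu - PU (T^[n] x), T^[n] x - T^[n+1] x - v⟫ + ‖T^[n] x - T^[n+1] x - v‖ ^ 2 -
        ⟪T^[n] x - T^[n+1] x - v, rr n⟫) +
      ((n : ℝ) + 1) * ⟪T^[n] x - T^[n+1] x - v, v⟫ := by
    intro uu huu n
    have h1 : (uu - v) - prox (RU (T^[n] x)) =
        (uu - PU (T^[n] x)) + (T^[n] x - T^[n+1] x - v) := by
      rw [hpq n]; abel
    have h2 : RU (T^[n] x) - prox (RU (T^[n] x)) =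
        (T^[n] x - T^[n+1] x - v) - rr n + ((n : ℝ) + 1) • v := by
      rw [hsub n, hxq n]
      module
    have hexpand : ∀ (A B r w : X) (cc : ℝ), ⟪A + B, (B - r) + cc • w⟫ =
        ⟪A, B⟫ - ⟪A, r⟫ + cc * ⟪A, w⟫ + (‖B‖ ^ 2 - ⟪B, r⟫ + cc * ⟪B, w⟫) := by
      intro A B r w cc
      rw [inner_add_left, inner_add_right, inner_add_right, inner_sub_right,
        inner_sub_right, real_inner_smul_right, real_inner_smul_right,
        real_inner_self_eq_norm_sq]
    rw [h1, h2, hexpand,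
      hinner0 _ _ (Submodule.sub_mem U huu (hPmem _)) (hrmem n),
      hinner0 _ _ (Submodule.sub_mem U huu (hPmem _)) hvU]
    ring

  -- per-step inequality for arbitrary u ∈ U
  have hkey : ∀ uu : X, uu ∈ U → ∀ n : ℕ,
      g (prox (RU (T^[n] x))) +
        (((⟪uu - PU (T^[n] x), T^[n] x - T^[n+1] x - v⟫ + ‖T^[n] x - T^[n+1] x - v‖ ^ 2 -
          ⟪T^[n] x - T^[n+1] x - v, rr n⟫) +
          ((n : ℝ) + 1) * ⟪T^[n] x - T^[n+1] x - v, v⟫ : ℝ) : EReal) ≤ g (uu - v) := by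
    intro uu huu n
    have h := DR_prox_subgrad hgproper hgconv hprox (RU (T^[n] x)) (uu - v)
    rw [hinnereq uu huu n] at h
    exact h
  -- the epsilon sequences tend to zero
  have hεlim : ∀ uu : X, Tendsto (fun n =>
      ⟪uu - PU (T^[n] x), T^[n] x - T^[n+1] x - v⟫ + ‖T^[n] x - T^[n+1] x - v‖ ^ 2 -
        ⟪T^[n] x - T^[n+1] x - v, rr n⟫) atTop (𝓝 0) := by
    intro uu
    have hten : Tendsto (fun n : ℕ => (‖uu‖ + (‖bb 0‖ + ‖f₀‖) + ‖bb 0‖ + (‖bb 0‖ + ‖f₀‖)) *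
        ‖T^[n] x - T^[n+1] x - v‖) atTop (𝓝 0) := by
      have := hδ.const_mul (‖uu‖ + (‖bb 0‖ + ‖f₀‖) + ‖bb 0‖ + (‖bb 0‖ + ‖f₀‖))
      simpa using this
    refine squeeze_zero_norm (fun n => ?_) hten
    have c1 := abs_real_inner_le_norm (uu - PU (T^[n] x)) (T^[n] x - T^[n+1] x - v)
    have c2 := abs_real_inner_le_norm (T^[n] x - T^[n+1] x - v) (rr n)
    have c3 : ‖uu - PU (T^[n] x)‖ ≤ ‖uu‖ + (‖bb 0‖ + ‖f₀‖) :=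
      (norm_sub_le _ _).trans (add_le_add_right (hqb n) _)
    have c4 := hδvb n
    have c5 := hrb n
    have c6 := norm_nonneg (T^[n] x - T^[n+1] x - v)
    have c7 := norm_nonneg (uu - PU (T^[n] x))
    have c8 := norm_nonneg (rr n)
    rw [Real.norm_eq_abs]
    have h3 : |‖T^[n] x - T^[n+1] x - v‖ ^ 2| = ‖T^[n] x - T^[n+1] x - v‖ ^ 2 :=
      abs_of_nonneg (by positivity)
    have habs : |⟪uu - PU (T^[n] x), T^[n] x - T^[n+1] x - v⟫ +
        ‖T^[n] x - T^[n+1] x - v‖ ^ 2 - ⟪T^[n] x - T^[n+1] x - v, rr n⟫| ≤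
        |⟪uu - PU (T^[n] x), T^[n] x - T^[n+1] x - v⟫| + ‖T^[n] x - T^[n+1] x - v‖ ^ 2 +
          |⟪T^[n] x - T^[n+1] x - v, rr n⟫| := by
      have h4 := abs_add_three (⟪uu - PU (T^[n] x), T^[n] x - T^[n+1] x - v⟫)
        (‖T^[n] x - T^[n+1] x - v‖ ^ 2) (-⟪T^[n] x - T^[n+1] x - v, rr n⟫)
      rw [abs_neg, h3] at h4
      calc |⟪uu - PU (T^[n] x), T^[n] x - T^[n+1] x - v⟫ +
          ‖T^[n] x - T^[n+1] x - v‖ ^ 2 - ⟪T^[n] x - T^[n+1] x - v, rr n⟫|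
          = |⟪uu - PU (T^[n] x), T^[n] x - T^[n+1] x - v⟫ +
          ‖T^[n] x - T^[n+1] x - v‖ ^ 2 + -⟪T^[n] x - T^[n+1] x - v, rr n⟫| := by
            rw [sub_eq_add_neg]
        _ ≤ _ := h4
    refine habs.trans ?_
    have d1 : |⟪uu - PU (T^[n] x), T^[n] x - T^[n+1] x - v⟫| ≤
        (‖uu‖ + (‖bb 0‖ + ‖f₀‖)) * ‖T^[n] x - T^[n+1] x - v‖ :=
      c1.trans (mul_le_mul_of_nonneg_right c3 c6)
    have d2 : ‖T^[n] x - T^[n+1] x - v‖ ^ 2 ≤ ‖bb 0‖ * ‖T^[n] x - T^[n+1] x - v‖ := by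
      nlinarith
    have d3 : |⟪T^[n] x - T^[n+1] x - v, rr n⟫| ≤
        (‖bb 0‖ + ‖f₀‖) * ‖T^[n] x - T^[n+1] x - v‖ := by
      refine c2.trans ?_
      rw [mul_comm]
      exact mul_le_mul_of_nonneg_right c5 c6
    have hsum : (‖uu‖ + (‖bb 0‖ + ‖f₀‖) + ‖bb 0‖ + (‖bb 0‖ + ‖f₀‖)) *
        ‖T^[n] x - T^[n+1] x - v‖ =
        (‖uu‖ + (‖bb 0‖ + ‖f₀‖)) * ‖T^[n] x - T^[n+1] x - v‖ +
        ‖bb 0‖ * ‖T^[n] x - T^[n+1] x - v‖ +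
        (‖bb 0‖ + ‖f₀‖) * ‖T^[n] x - T^[n+1] x - v‖ := by ring
    rw [hsum]
    linarith [d1, d2, d3]
  -- minimizer from the fixed point
  have hproxw : prox (RU (f₀ + v)) = PU (f₀ + v) - v := by
    have h : f₀ = f₀ + v - PU (f₀ + v) + prox (RU (f₀ + v)) := by
      conv_lhs => rw [hf₀]
      rw [hT]
    have h2 : prox (RU (f₀ + v)) = f₀ - (f₀ + v - PU (f₀ + v)) := by
      conv_lhs => rw [eq_sub_of_add_eq' h.symm]
    rw [h2]; abel
  have hs_mem : RU (f₀ + v) - (PU (f₀ + v) - v) ∈ Uᗮ := by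
    have e : RU (f₀ + v) - (PU (f₀ + v) - v) = -((f₀ + v) - PU (f₀ + v)) + v := by
      rw [hRU, two_smul]; abel
    rw [e]
    exact Submodule.add_mem _ (Submodule.neg_mem _ (hPperp _)) hvU
  have hmin : ∀ uu : X, uu ∈ U → g (PU (f₀ + v) - v) ≤ g (uu - v) := by
    intro uu huu
    have h := DR_prox_subgrad hgproper hgconv hprox (RU (f₀ + v)) (uu - v)
    rw [hproxw] at h
    have hz : ⟪uu - v - (PU (f₀ + v) - v), RU (f₀ + v) - (PU (f₀ + v) - v)⟫ = 0 := by
      have e : uu - v - (PU (f₀ + v) - v) = uu - PU (f₀ + v) := by abel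
      rw [e]
      exact hinner0 _ _ (Submodule.sub_mem U huu (hPmem _)) hs_mem
    rw [hz] at h
    simpa using h
  have hlow : ∀ n : ℕ, g (PU (f₀ + v) - v) +
      ((⟪v - (T^[n] x - T^[n+1] x), RU (f₀ + v) - (PU (f₀ + v) - v)⟫ : ℝ) : EReal) ≤
      g (prox (RU (T^[n] x))) := by
    intro n
    have h := DR_prox_subgrad hgproper hgconv hprox (RU (f₀ + v)) (prox (RU (T^[n] x)))
    rw [hproxw] at h
    have e : prox (RU (T^[n] x)) - (PU (f₀ + v) - v) =
        (PU (T^[n] x) - PU (f₀ + v)) + (v - (T^[n] x - T^[n+1] x)) := by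
      rw [hpq n]; abel
    rw [e, inner_add_left,
      hinner0 _ _ (Submodule.sub_mem U (hPmem _) (hPmem _)) hs_mem, zero_add] at h
    exact h
  -- real-valued versions
  have hppt : ∀ n, g (prox (RU (T^[n] x))) ≠ ⊤ := fun n =>
    DR_prox_val_ne_top hgproper hprox _
  have hppb : ∀ n, g (prox (RU (T^[n] x))) ≠ ⊥ := fun n => hgproper.1 _
  have hqt : g (PU (f₀ + v) - v) ≠ ⊤ := by
    rw [← hproxw]; exact DR_prox_val_ne_top hgproper hprox _
  have hqb' : g (PU (f₀ + v) - v) ≠ ⊥ := hgproper.1 _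
  set LL : ℝ := (g (PU (f₀ + v) - v)).toReal with hLL
  set tt : ℕ → ℝ := fun n => (g (prox (RU (T^[n] x)))).toReal with htt
  have hgp_coe : ∀ n, g (prox (RU (T^[n] x))) = ((tt n : ℝ) : EReal) := fun n =>
    (EReal.coe_toReal (hppt n) (hppb n)).symm
  have hgq_coe : g (PU (f₀ + v) - v) = ((LL : ℝ) : EReal) :=
    (EReal.coe_toReal hqt hqb').symm
  have hlowR : ∀ n : ℕ,
      LL + ⟪v - (T^[n] x - T^[n+1] x), RU (f₀ + v) - (PU (f₀ + v) - v)⟫ ≤ tt n := by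
    intro n
    have h := hlow n
    rw [hgq_coe, hgp_coe n, ← EReal.coe_add, EReal.coe_le_coe_iff] at h
    exact h
  have huppR : ∀ n : ℕ, tt n +
      (⟪PU (f₀ + v) - PU (T^[n] x), T^[n] x - T^[n+1] x - v⟫ +
        ‖T^[n] x - T^[n+1] x - v‖ ^ 2 - ⟪T^[n] x - T^[n+1] x - v, rr n⟫) ≤ LL := by
    intro n
    have h := hkey (PU (f₀ + v)) (hPmem _) n
    rw [hgp_coe n, hgq_coe, ← EReal.coe_add, EReal.coe_le_coe_iff] at h
    have h2 := mul_nonneg (by positivity : (0:ℝ) ≤ (n : ℝ) + 1) (hmd n)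
    linarith
  -- convergence of the values
  have httlim : Tendsto tt atTop (𝓝 LL) := by
    have hlolim : Tendsto (fun n : ℕ =>
        LL + ⟪v - (T^[n] x - T^[n+1] x), RU (f₀ + v) - (PU (f₀ + v) - v)⟫) atTop (𝓝 LL) := by
      have h1 : Tendsto (fun n : ℕ =>
          ⟪v - (T^[n] x - T^[n+1] x), RU (f₀ + v) - (PU (f₀ + v) - v)⟫) atTop (𝓝 0) := by
        have hten : Tendsto (fun n : ℕ => ‖RU (f₀ + v) - (PU (f₀ + v) - v)‖ *
            ‖T^[n] x - T^[n+1] x - v‖) atTop (𝓝 0) := by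
          have := hδ.const_mul ‖RU (f₀ + v) - (PU (f₀ + v) - v)‖
          simpa using this
        refine squeeze_zero_norm (fun n => ?_) hten
        rw [Real.norm_eq_abs]
        have c1 := abs_real_inner_le_norm (v - (T^[n] x - T^[n+1] x))
          (RU (f₀ + v) - (PU (f₀ + v) - v))
        have e : ‖v - (T^[n] x - T^[n+1] x)‖ = ‖T^[n] x - T^[n+1] x - v‖ := by
          rw [← norm_neg]; congr 1; abel
        rw [e] at c1
        linarith [c1, mul_comm ‖T^[n] x - T^[n+1] x - v‖ ‖RU (f₀ + v) - (PU (f₀ + v) - v)‖]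
      simpa using (h1.const_add LL)
    have huplim : Tendsto (fun n : ℕ => LL -
        (⟪PU (f₀ + v) - PU (T^[n] x), T^[n] x - T^[n+1] x - v⟫ +
          ‖T^[n] x - T^[n+1] x - v‖ ^ 2 - ⟪T^[n] x - T^[n+1] x - v, rr n⟫)) atTop (𝓝 LL) := by
      have := (hεlim (PU (f₀ + v))).const_sub LL
      simpa using this
    refine tendsto_of_tendsto_of_tendsto_of_le_of_le hlolim huplim
      (fun n => hlowR n) (fun n => ?_)
    have := huppR n
    linarith
  have hiInf : (⨅ u : U, g ((u : X) - v)) = g (PU (f₀ + v) - v) := by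
    refine le_antisymm ?_ (le_iInf fun uu => hmin uu uu.2)
    exact iInf_le (fun u : U => g ((u : X) - v)) ⟨PU (f₀ + v), hPmem _⟩
  refine ⟨?_, ?_, ?_, ?_, hC5, ?_, ?_⟩
  -- (1) the epsilon sequence
  · refine ⟨fun n => ⟪u₀ - PU (T^[n] x), T^[n] x - T^[n+1] x - v⟫ +
      ‖T^[n] x - T^[n+1] x - v‖ ^ 2 - ⟪T^[n] x - T^[n+1] x - v, rr n⟫, hεlim u₀, fun n => ?_⟩
    constructor
    · exact hkey u₀ hu₀U n
    · refine le_trans (add_le_add_right ?_ _) (hkey u₀ hu₀U n)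
      apply EReal.coe_le_coe_iff.2
      have := mul_nonneg (by positivity : (0:ℝ) ≤ (n : ℝ) + 1) (hmd n)
      simp only []
      linarith
  -- (2) boundedness of prox sequence
  · refine ⟨(‖bb 0‖ + ‖f₀‖) + (‖bb 0‖ + ‖v‖), fun n => ?_⟩
    rw [hpq n]
    refine (norm_sub_le _ _).trans (add_le_add (hqb n) ?_)
    have e : T^[n] x - T^[n+1] x = (T^[n] x - T^[n+1] x - v) + v := by abel
    rw [e]
    exact (norm_add_le _ _).trans (add_le_add_left (hδvb n) _)
  -- (3) weak cluster points of prox sequence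
  · rintro c ⟨φ, hφmono, hφw⟩
    have hplim : ∀ w : X, Tendsto (fun n : ℕ => (⟪prox (RU (T^[n] x)), w⟫ : ℝ)) atTop
        (𝓝 (-⟪v, w⟫)) → True := fun _ _ => trivial
    have hiplim : ∀ w : X, w ∈ Uᗮ →
        Tendsto (fun k : ℕ => (⟪prox (RU (T^[φ k] x)), w⟫ : ℝ)) atTop (𝓝 (-⟪v, w⟫)) := by
      intro w hw
      have hgen : ∀ P D ww : X, P ∈ U → ww ∈ Uᗮ →
          (⟪P - D, ww⟫ : ℝ) = -(⟪D - v, ww⟫ + ⟪v, ww⟫) := by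
        intro P D ww hP hww
        have e1 : (⟪P - D, ww⟫ : ℝ) = ⟪P, ww⟫ - ⟪D, ww⟫ := inner_sub_left _ _ _
        have e2 : (⟪D - v, ww⟫ : ℝ) = ⟪D, ww⟫ - ⟪v, ww⟫ := inner_sub_left _ _ _
        rw [e1, e2, hinner0 _ _ hP hww]
        ring
      have hseq : ∀ n : ℕ, (⟪prox (RU (T^[n] x)), w⟫ : ℝ) =
          -(⟪T^[n] x - T^[n+1] x - v, w⟫ + ⟪v, w⟫) := by
        intro n
        rw [hpq n]
        exact hgen _ _ w (hPmem _) hw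
      have hlim0 : Tendsto (fun n : ℕ => (⟪T^[n] x - T^[n+1] x - v, w⟫ : ℝ)) atTop (𝓝 0) := by
        have hten : Tendsto (fun n : ℕ => ‖w‖ * ‖T^[n] x - T^[n+1] x - v‖) atTop (𝓝 0) := by
          have := hδ.const_mul ‖w‖
          simpa using this
        refine squeeze_zero_norm (fun n => ?_) hten
        rw [Real.norm_eq_abs]
        have := abs_real_inner_le_norm (T^[n] x - T^[n+1] x - v) w
        linarith [mul_comm ‖T^[n] x - T^[n+1] x - v‖ ‖w‖]
      have h1 : Tendsto (fun n : ℕ => (⟪prox (RU (T^[n] x)), w⟫ : ℝ)) atTop (𝓝 (-⟪v, w⟫)) := by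
        have h2 : Tendsto (fun n : ℕ => -(⟪T^[n] x - T^[n+1] x - v, w⟫ + ⟪v, w⟫)) atTop
            (𝓝 (-(0 + ⟪v, w⟫))) := (hlim0.add_const _).neg
        rw [zero_add] at h2
        exact Tendsto.congr (fun n => (hseq n).symm) h2
      exact h1.comp hφmono.tendsto_atTop
    constructor
    · refine ⟨c + v, ?_, by abel⟩
      rw [← Submodule.orthogonal_orthogonal U]
      rw [Submodule.mem_orthogonal]
      intro w hw
      have huniq := tendsto_nhds_unique (hφw w) (hiplim w hw)
      rw [real_inner_comm, inner_add_left]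
      linarith [huniq]
    · intro uu huu
      have hwl := DR_weak_lsc hgproper hglsc hgconv
        (fun k => prox (RU (T^[φ k] x))) c hφw (fun k => hppt (φ k)) LL
        (httlim.comp hφmono.tendsto_atTop)
      refine hwl.trans ?_
      rw [← hgq_coe]
      exact hmin uu huu
  -- (4) value convergence
  · rw [hiInf, hgq_coe]
    exact Tendsto.congr (fun n => (hgp_coe n).symm) (EReal.tendsto_coe.2 httlim)
  -- (6) boundedness of PU sequence
  · exact ⟨‖bb 0‖ + ‖f₀‖, hqb⟩
  -- (7) weak cluster points of PU sequence
  · rintro c ⟨φ, hφmono, hφw⟩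
    have hcU : c ∈ U := by
      rw [← Submodule.orthogonal_orthogonal U]
      rw [Submodule.mem_orthogonal]
      intro w hw
      have h0 : Tendsto (fun k : ℕ => (⟪PU (T^[φ k] x), w⟫ : ℝ)) atTop (𝓝 0) := by
        refine Tendsto.congr (fun k => ?_) tendsto_const_nhds
        exact (hinner0 _ _ (hPmem _) hw).symm
      have huniq := tendsto_nhds_unique (hφw w) h0
      rw [real_inner_comm]
      exact huniq
    refine ⟨hcU, ?_⟩
    intro uu huu
    have hwp : ∀ w : X, Tendsto (fun k : ℕ => (⟪prox (RU (T^[φ k] x)), w⟫ : ℝ)) atTop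
        (𝓝 ⟪c - v, w⟫) := by
      intro w
      have hgen2 : ∀ P D ww : X, (⟪P - D, ww⟫ : ℝ) =
          ⟪P, ww⟫ - ⟪D - v, ww⟫ - ⟪v, ww⟫ := by
        intro P D ww
        have e1 : (⟪P - D, ww⟫ : ℝ) = ⟪P, ww⟫ - ⟪D, ww⟫ := inner_sub_left _ _ _
        have e2 : (⟪D - v, ww⟫ : ℝ) = ⟪D, ww⟫ - ⟪v, ww⟫ := inner_sub_left _ _ _
        rw [e1, e2]
        ring
      have hseq : ∀ n : ℕ, (⟪prox (RU (T^[n] x)), w⟫ : ℝ) =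
          ⟪PU (T^[n] x), w⟫ - ⟪T^[n] x - T^[n+1] x - v, w⟫ - ⟪v, w⟫ := by
        intro n
        rw [hpq n]
        exact hgen2 _ _ w
      have hlim0 : Tendsto (fun n : ℕ => (⟪T^[n] x - T^[n+1] x - v, w⟫ : ℝ)) atTop (𝓝 0) := by
        have hten : Tendsto (fun n : ℕ => ‖w‖ * ‖T^[n] x - T^[n+1] x - v‖) atTop (𝓝 0) := by
          have := hδ.const_mul ‖w‖
          simpa using this
        refine squeeze_zero_norm (fun n => ?_) hten
        rw [Real.norm_eq_abs]
        have := abs_real_inner_le_norm (T^[n] x - T^[n+1] x - v) w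
        linarith [mul_comm ‖T^[n] x - T^[n+1] x - v‖ ‖w‖]
      have h2 : Tendsto (fun k : ℕ => (⟪PU (T^[φ k] x), w⟫ : ℝ) -
          ⟪T^[φ k] x - T^[φ k + 1] x - v, w⟫ - ⟪v, w⟫) atTop
          (𝓝 (⟪c, w⟫ - 0 - ⟪v, w⟫)) :=
        ((hφw w).sub (hlim0.comp hφmono.tendsto_atTop)).sub tendsto_const_nhds
      rw [sub_zero] at h2
      have h3 : (⟪c - v, w⟫ : ℝ) = ⟪c, w⟫ - ⟪v, w⟫ := inner_sub_left _ _ _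
      rw [h3]
      exact Tendsto.congr (fun k => (hseq (φ k)).symm) h2
    have hwl := DR_weak_lsc hgproper hglsc hgconv
      (fun k => prox (RU (T^[φ k] x))) (c - v) hwp (fun k => hppt (φ k)) LL
      (httlim.comp hφmono.tendsto_atTop)
    refine hwl.trans ?_
    rw [← hgq_coe]
    exact hmin uu huu
end
end
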